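/- arXiv:2310.05549 — 6 statements merged into one kernel-verified Lean document; each statement's English description precedes it below -/
import Mathlib

section
/- Let (Ω, 𝓕, ℙ) be a probability space, X : Ω → 𝓧 a measurable map into a measurable space, W : Ω → ℝ a random variable taking values in {0,1}, and Y₀, Y₁ : Ω → ℝ integrable random variables. Let e(X) be a version of the conditional expectation E[W | σ(X)] and suppose there exists ε > 0 with ε ≤ e(X) ≤ 1 − ε almost surely. Assume unconfoundedness: the pair (Y₀, Y₁) is conditionally independent of W given σ(X). Define the observed outcome Y^obs = W·Y₁ + (1−W)·Y₀, and for a constant C ∈ ℝ define the transformed outcome Ẑ* = (Y^obs − C)·(W − e(X)) / (e(X)·(1 − e(X))). Then, almost surely, E[Ẑ* | σ(X)] = E[Y₁ | σ(X)] − E[Y₀ | σ(X)]. -/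
open MeasureTheory ProbabilityTheory MeasurableSpace Set

lemma condExp_mul_of_condIndepFun'
    {Ω : Type*} {m : MeasurableSpace Ω} [mΩ : MeasurableSpace Ω] [StandardBorelSpace Ω]
    {μ : Measure Ω} [IsProbabilityMeasure μ] (hm : m ≤ mΩ)
    {W Y : Ω → ℝ} (hW : Measurable W) (hWb : ∀ ω, ‖W ω‖ ≤ 1)
    (hYint : Integrable Y μ)
    (hindep : CondIndepFun m hm W Y μ) :
    μ[fun ω => W ω * Y ω | m] =ᵐ[μ] fun ω => (μ[W|m]) ω * (μ[Y|m]) ω := by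
  set κ := condExpKernel μ m with hκ
  -- measurable version of Y
  set Y' := hYint.1.mk Y with hY'def
  have hY' : StronglyMeasurable Y' := hYint.1.stronglyMeasurable_mk
  have hY'm : Measurable Y' := hY'.measurable
  have hYY' : Y =ᵐ[μ] Y' := hYint.1.ae_eq_mk
  -- null set where they differ
  set N := toMeasurable μ {ω | Y ω ≠ Y' ω} with hNdef
  have hNmeas : MeasurableSet N := measurableSet_toMeasurable _ _
  have hNnull : μ N = 0 := by
    rw [measure_toMeasurable]
    exact hYY'
  have hsub : {ω | Y ω ≠ Y' ω} ⊆ N := subset_toMeasurable _ _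
  -- κ ω N = 0 a.e.
  have hκN : ∀ᵐ ω ∂μ, κ ω N = 0 := by
    have h1 := condExpKernel_ae_eq_condExp hm hNmeas (μ := μ)
    have h2 : (μ⟦N | m⟧) =ᵐ[μ] 0 := by
      have : N.indicator (fun _ => (1:ℝ)) =ᵐ[μ] 0 := by
        have : ∀ᵐ ω ∂μ, ω ∉ N := by
          rw [ae_iff]; simpa using hNnull
        filter_upwards [this] with ω hω
        simp [Set.indicator_of_notMem hω]
      refine (condExp_congr_ae this).trans ?_
      rw [condExp_zero]
    filter_upwards [h1, h2] with ω h1ω h2ω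
    have : (κ ω N).toReal = 0 := by exact h1ω.trans h2ω
    have hne : κ ω N ≠ ⊤ := by
      haveI : IsProbabilityMeasure (κ ω) := IsMarkovKernel.isProbabilityMeasure ω
      exact measure_ne_top _ _
    exact (ENNReal.toReal_eq_zero_iff _).mp this |>.resolve_right hne
  -- product rule for generating sets, a.e.
  have hsets : ∀ q r : ℚ, ∀ᵐ ω ∂μ,
      κ ω (W ⁻¹' Iic (q:ℝ) ∩ Y ⁻¹' Iic (r:ℝ))
        = κ ω (W ⁻¹' Iic (q:ℝ)) * κ ω (Y ⁻¹' Iic (r:ℝ)) := by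
    intro q r
    have h := Kernel.IndepFun.meas_inter hindep
      (s := W ⁻¹' Iic (q:ℝ)) (t := Y ⁻¹' Iic (r:ℝ))
      ⟨Iic (q:ℝ), measurableSet_Iic, rfl⟩ ⟨Iic (r:ℝ), measurableSet_Iic, rfl⟩
    exact ae_eq_of_ae_eq_trim h
  have hall : ∀ᵐ ω ∂μ, ∀ q r : ℚ,
      κ ω (W ⁻¹' Iic (q:ℝ) ∩ Y ⁻¹' Iic (r:ℝ))
        = κ ω (W ⁻¹' Iic (q:ℝ)) * κ ω (Y ⁻¹' Iic (r:ℝ)) := by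
    rw [ae_all_iff]; intro q; rw [ae_all_iff]; intro r; exact hsets q r
  -- key: a.e. factorization of integrals
  have key : ∀ᵐ ω ∂μ, ∫ y, W y * Y y ∂(κ ω) = (∫ y, W y ∂(κ ω)) * ∫ y, Y y ∂(κ ω) := by
    filter_upwards [hall, hκN] with ω hqr hN0
    haveI : IsProbabilityMeasure (κ ω) := IsMarkovKernel.isProbabilityMeasure ω
    have hYY'κ : Y =ᵐ[κ ω] Y' := by
      rw [Filter.EventuallyEq, ae_iff]
      exact measure_mono_null (fun x hx => hsub hx) hN0
    have hsetY : ∀ t : Set ℝ, κ ω (Y' ⁻¹' t) = κ ω (Y ⁻¹' t) := by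
      intro t
      refine measure_congr ?_
      filter_upwards [hYY'κ] with x hx
      show (Y' x ∈ t) = (Y x ∈ t)
      rw [hx]
    have hsetWY : ∀ s t : Set ℝ, κ ω (W ⁻¹' s ∩ Y' ⁻¹' t) = κ ω (W ⁻¹' s ∩ Y ⁻¹' t) := by
      intro s t
      refine measure_congr ?_
      filter_upwards [hYY'κ] with x hx
      show (x ∈ W ⁻¹' s ∧ Y' x ∈ t) = (x ∈ W ⁻¹' s ∧ Y x ∈ t)
      rw [hx]
    -- independence of W and Y' under κ ω
    have hindepω : IndepFun W Y' (κ ω) := by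
      have hpi : IsPiSystem (⋃ q : ℚ, {Iic (q:ℝ)}) := Real.isPiSystem_Iic_rat
      have hWcomap : MeasurableSpace.comap W (inferInstance : MeasurableSpace ℝ)
          = generateFrom ((W ⁻¹' ·) '' (⋃ q : ℚ, {Iic (q:ℝ)})) := by
        conv_lhs => rw [BorelSpace.measurable_eq (α := ℝ), Real.borel_eq_generateFrom_Iic_rat]
        rw [comap_generateFrom]
      have hYcomap : MeasurableSpace.comap Y' (inferInstance : MeasurableSpace ℝ)
          = generateFrom ((Y' ⁻¹' ·) '' (⋃ q : ℚ, {Iic (q:ℝ)})) := by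
        conv_lhs => rw [BorelSpace.measurable_eq (α := ℝ), Real.borel_eq_generateFrom_Iic_rat]
        rw [comap_generateFrom]
      have hp1 : IsPiSystem ((W ⁻¹' ·) '' (⋃ q : ℚ, {Iic (q:ℝ)})) := by
        exact hpi.comap W
      have hp2 : IsPiSystem ((Y' ⁻¹' ·) '' (⋃ q : ℚ, {Iic (q:ℝ)})) := by
        exact hpi.comap Y'
      have hIS : IndepSets ((W ⁻¹' ·) '' (⋃ q : ℚ, {Iic (q:ℝ)}))
          ((Y' ⁻¹' ·) '' (⋃ q : ℚ, {Iic (q:ℝ)})) (κ ω) := by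
        rintro s t ⟨s', hs', rfl⟩ ⟨t', ht', rfl⟩
        simp only [Set.mem_iUnion, Set.mem_singleton_iff] at hs' ht'
        obtain ⟨q, rfl⟩ := hs'
        obtain ⟨r, rfl⟩ := ht'
        refine Filter.Eventually.of_forall fun a => ?_
        simp only [Kernel.const_apply]
        rw [hsetWY, hsetY]
        exact hqr q r
      have hInd : Indep (MeasurableSpace.comap W (inferInstance : MeasurableSpace ℝ))
          (MeasurableSpace.comap Y' (inferInstance : MeasurableSpace ℝ)) (κ ω) :=
        IndepSets.indep hW.comap_le hY'm.comap_le hp1 hp2 hWcomap hYcomap hIS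
      exact hInd
    have h1 : ∫ y, W y * Y y ∂(κ ω) = ∫ y, W y * Y' y ∂(κ ω) := by
      refine integral_congr_ae ?_
      filter_upwards [hYY'κ] with x hx
      rw [hx]
    have h2 : ∫ y, Y y ∂(κ ω) = ∫ y, Y' y ∂(κ ω) := integral_congr_ae hYY'κ
    rw [h1, h2]
    exact IndepFun.integral_mul_eq_mul_integral hindepω hW.aestronglyMeasurable hY'm.aestronglyMeasurable
  -- conclude
  have hWint : Integrable W μ :=
    (integrable_const (1:ℝ)).mono' hW.aestronglyMeasurable (Filter.Eventually.of_forall hWb)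
  have hWYint : Integrable (fun ω => W ω * Y ω) μ := by
    refine hYint.mono (hW.aestronglyMeasurable.mul hYint.1) ?_
    refine Filter.Eventually.of_forall fun ω => ?_
    rw [norm_mul]
    calc ‖W ω‖ * ‖Y ω‖ ≤ 1 * ‖Y ω‖ := by
          exact mul_le_mul_of_nonneg_right (hWb ω) (norm_nonneg _)
      _ = ‖Y ω‖ := one_mul _
  have h1 := condExp_ae_eq_integral_condExpKernel hm hWYint
  have h2 := condExp_ae_eq_integral_condExpKernel hm hWint
  have h3 := condExp_ae_eq_integral_condExpKernel hm hYint
  filter_upwards [h1, h2, h3, key] with ω e1 e2 e3 ek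
  rw [e1, e2, e3, ek]

/-- Conditional unbiasedness of the constant-shifted transformed outcome
`Ẑ* = (Y^obs − C)·(W − e(X)) / (e(X)·(1 − e(X)))` for the CATE. -/
theorem transformed_outcome_shifted_condExp
    {Ω 𝓧 : Type*} [MeasureSpace Ω] [IsProbabilityMeasure (ℙ : Measure Ω)]
    [StandardBorelSpace Ω]
    [m𝓧 : MeasurableSpace 𝓧]
    (X : Ω → 𝓧) (hX : Measurable X)
    (W Y₀ Y₁ : Ω → ℝ)
    (hW : Measurable W) (hWbin : ∀ ω, W ω = 0 ∨ W ω = 1)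
    (hY₀ : Integrable Y₀ ℙ) (hY₁ : Integrable Y₁ ℙ)
    (e : Ω → ℝ) (he : e =ᵐ[ℙ] ℙ[W | m𝓧.comap X])
    (ε : ℝ) (hε : 0 < ε)
    (hbound : ∀ᵐ ω ∂ℙ, ε ≤ e ω ∧ e ω ≤ 1 - ε)
    (hunconf : CondIndepFun (m𝓧.comap X) hX.comap_le (fun ω => (Y₀ ω, Y₁ ω)) W ℙ)
    (C : ℝ) :
    ℙ[(fun ω => ((W ω * Y₁ ω + (1 - W ω) * Y₀ ω) - C) * (W ω - e ω) /
        (e ω * (1 - e ω))) | m𝓧.comap X]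
      =ᵐ[ℙ] fun ω => (ℙ[Y₁ | m𝓧.comap X]) ω - (ℙ[Y₀ | m𝓧.comap X]) ω := by
  have hm : (m𝓧.comap X) ≤ (inferInstance : MeasurableSpace Ω) := hX.comap_le
  set g := (ℙ : Measure Ω)[W | (m𝓧.comap X)] with hgdef
  -- basic facts about g
  have hgsm : StronglyMeasurable[(m𝓧.comap X)] g := stronglyMeasurable_condExp
  have hgm : Measurable[(m𝓧.comap X)] g := hgsm.measurable
  have hgm0 : Measurable g := hgm.mono hm le_rfl
  have hgint : Integrable g ℙ := integrable_condExp
  have hgb : ∀ᵐ ω ∂ℙ, ε ≤ g ω ∧ g ω ≤ 1 - ε := by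
    filter_upwards [hbound, he] with ω h1 h2
    rw [← h2]; exact h1
  -- norms of W and 1 - W
  have hWnorm : ∀ ω, ‖W ω‖ ≤ 1 := fun ω => by rcases hWbin ω with h | h <;> simp [h]
  have h1Wnorm : ∀ ω, ‖1 - W ω‖ ≤ 1 := fun ω => by rcases hWbin ω with h | h <;> simp [h]
  -- integrability
  have hWint : Integrable W ℙ :=
    (integrable_const (1:ℝ)).mono' hW.aestronglyMeasurable (Filter.Eventually.of_forall hWnorm)
  have hWY1 : Integrable (fun ω => W ω * Y₁ ω) ℙ := by
    refine hY₁.mono (hW.aestronglyMeasurable.mul hY₁.1) (Filter.Eventually.of_forall fun ω => ?_)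
    rw [norm_mul]
    nlinarith [norm_nonneg (Y₁ ω), hWnorm ω, norm_nonneg (W ω)]
  have hWY0 : Integrable (fun ω => W ω * Y₀ ω) ℙ := by
    refine hY₀.mono (hW.aestronglyMeasurable.mul hY₀.1) (Filter.Eventually.of_forall fun ω => ?_)
    rw [norm_mul]
    nlinarith [norm_nonneg (Y₀ ω), hWnorm ω, norm_nonneg (W ω)]
  have hF2int : Integrable (fun ω => (1 - W ω) * Y₀ ω) ℙ := by
    refine hY₀.mono ((aestronglyMeasurable_const.sub hW.aestronglyMeasurable).mul hY₀.1)
      (Filter.Eventually.of_forall fun ω => ?_)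
    rw [norm_mul]
    nlinarith [norm_nonneg (Y₀ ω), h1Wnorm ω, norm_nonneg (1 - W ω)]
  have hWg : Integrable (fun ω => W ω - g ω) ℙ := hWint.sub hgint
  -- conditional independence of components
  have hciY1 : CondIndepFun (m𝓧.comap X) hX.comap_le W Y₁ ℙ :=
    (hunconf.comp measurable_snd measurable_id).symm
  have hciY0 : CondIndepFun (m𝓧.comap X) hX.comap_le W Y₀ ℙ :=
    (hunconf.comp measurable_fst measurable_id).symm
  -- product rules
  have hkey1 : (ℙ : Measure Ω)[fun ω => W ω * Y₁ ω | (m𝓧.comap X)]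
      =ᵐ[ℙ] fun ω => g ω * ((ℙ : Measure Ω)[Y₁ | (m𝓧.comap X)]) ω :=
    condExp_mul_of_condIndepFun' hX.comap_le hW hWnorm hY₁ hciY1
  have hkey0 : (ℙ : Measure Ω)[fun ω => W ω * Y₀ ω | (m𝓧.comap X)]
      =ᵐ[ℙ] fun ω => g ω * ((ℙ : Measure Ω)[Y₀ | (m𝓧.comap X)]) ω :=
    condExp_mul_of_condIndepFun' hX.comap_le hW hWnorm hY₀ hciY0
  -- the three pieces
  set T₁ : Ω → ℝ := fun ω => (g ω)⁻¹ * (W ω * Y₁ ω) with hT₁def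
  set T₂ : Ω → ℝ := fun ω => (1 - g ω)⁻¹ * ((1 - W ω) * Y₀ ω) with hT₂def
  set T₃ : Ω → ℝ := fun ω => (C * (g ω * (1 - g ω))⁻¹) * (W ω - g ω) with hT₃def
  have hf₁sm : StronglyMeasurable[(m𝓧.comap X)] (fun ω => (g ω)⁻¹) := hgm.inv.stronglyMeasurable
  have hf₂sm : StronglyMeasurable[(m𝓧.comap X)] (fun ω => (1 - g ω)⁻¹) :=
    (measurable_const.sub hgm).inv.stronglyMeasurable
  have hf₃sm : StronglyMeasurable[(m𝓧.comap X)] (fun ω => C * (g ω * (1 - g ω))⁻¹) :=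
    (measurable_const.mul (hgm.mul (measurable_const.sub hgm)).inv).stronglyMeasurable
  -- integrability of the pieces
  have hT1 : Integrable T₁ ℙ := by
    refine (hY₁.norm.const_mul ε⁻¹).mono'
      (hgm0.inv.aestronglyMeasurable.mul (hW.aestronglyMeasurable.mul hY₁.1)) ?_
    filter_upwards [hgb] with ω hω
    have hg0 : 0 < g ω := lt_of_lt_of_le hε hω.1
    have hginv : (g ω)⁻¹ ≤ ε⁻¹ := by
      rw [inv_le_inv₀ hg0 hε]
      exact hω.1
    rw [norm_mul, norm_mul, Real.norm_eq_abs ((g ω)⁻¹), abs_of_pos (inv_pos.2 hg0)]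
    calc (g ω)⁻¹ * (‖W ω‖ * ‖Y₁ ω‖) ≤ ε⁻¹ * (1 * ‖Y₁ ω‖) := by
          refine mul_le_mul hginv ?_ (by positivity) (by positivity)
          exact mul_le_mul_of_nonneg_right (hWnorm ω) (norm_nonneg _)
      _ = ε⁻¹ * ‖Y₁ ω‖ := by ring
  have hT2 : Integrable T₂ ℙ := by
    refine (hY₀.norm.const_mul ε⁻¹).mono'
      ((measurable_const.sub hgm0).inv.aestronglyMeasurable.mul
        ((aestronglyMeasurable_const.sub hW.aestronglyMeasurable).mul hY₀.1)) ?_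
    filter_upwards [hgb] with ω hω
    have hg0 : 0 < 1 - g ω := lt_of_lt_of_le hε (by linarith [hω.2])
    have hginv : (1 - g ω)⁻¹ ≤ ε⁻¹ := by
      rw [inv_le_inv₀ hg0 hε]
      linarith [hω.2]
    rw [norm_mul, norm_mul, Real.norm_eq_abs ((1 - g ω)⁻¹), abs_of_pos (inv_pos.2 hg0)]
    calc (1 - g ω)⁻¹ * (‖1 - W ω‖ * ‖Y₀ ω‖) ≤ ε⁻¹ * (1 * ‖Y₀ ω‖) := by
          refine mul_le_mul hginv ?_ (by positivity) (by positivity)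
          exact mul_le_mul_of_nonneg_right (h1Wnorm ω) (norm_nonneg _)
      _ = ε⁻¹ * ‖Y₀ ω‖ := by ring
  have hT3 : Integrable T₃ ℙ := by
    refine (integrable_const (|C| * (ε * ε)⁻¹ * 2)).mono'
      ((measurable_const.mul (hgm0.mul (measurable_const.sub hgm0)).inv).aestronglyMeasurable.mul
        (hW.aestronglyMeasurable.sub hgm0.aestronglyMeasurable)) ?_
    filter_upwards [hgb] with ω hω
    have hg0 : 0 < g ω := lt_of_lt_of_le hε hω.1
    have hg1 : 0 < 1 - g ω := lt_of_lt_of_le hε (by linarith [hω.2])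
    have hP : ε * ε ≤ g ω * (1 - g ω) :=
      mul_le_mul hω.1 (by linarith [hω.2]) (le_of_lt hε) (le_of_lt hg0)
    have hPinv : (g ω * (1 - g ω))⁻¹ ≤ (ε * ε)⁻¹ := by
      rw [inv_le_inv₀ (by positivity) (by positivity)]
      exact hP
    have hWg2 : ‖W ω - g ω‖ ≤ 2 := by
      have h1 := hWnorm ω
      rw [Real.norm_eq_abs] at h1 ⊢
      rw [abs_le] at h1 ⊢
      constructor <;> nlinarith [hω.1, hω.2, hε]
    rw [norm_mul, norm_mul, Real.norm_eq_abs ((g ω * (1 - g ω))⁻¹),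
      abs_of_pos (inv_pos.2 (by positivity : (0:ℝ) < g ω * (1 - g ω)))]
    calc |C| * (g ω * (1 - g ω))⁻¹ * ‖W ω - g ω‖ ≤ |C| * (ε * ε)⁻¹ * 2 := by
          refine mul_le_mul ?_ hWg2 (norm_nonneg _) (by positivity)
          exact mul_le_mul_of_nonneg_left hPinv (abs_nonneg _)
      _ = |C| * (ε * ε)⁻¹ * 2 := rfl
  -- a.e. rewriting of the transformed outcome
  have hZeq : (fun ω => ((W ω * Y₁ ω + (1 - W ω) * Y₀ ω) - C) * (W ω - e ω) /
      (e ω * (1 - e ω))) =ᵐ[ℙ] fun ω => T₁ ω - T₂ ω - T₃ ω := by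
    filter_upwards [he, hbound] with ω hee hb
    have hg0 : e ω ≠ 0 := ne_of_gt (lt_of_lt_of_le hε hb.1)
    have hg1 : (1:ℝ) - e ω ≠ 0 := ne_of_gt (by linarith [hb.2, hε])
    simp only [hT₁def, hT₂def, hT₃def, ← hee]
    rcases hWbin ω with h | h <;> rw [h] <;> field_simp <;> ring
  -- condexp of the pieces
  have hE1 : (ℙ : Measure Ω)[T₁ | (m𝓧.comap X)]
      =ᵐ[ℙ] (fun ω => (g ω)⁻¹) * (ℙ : Measure Ω)[fun ω => W ω * Y₁ ω | (m𝓧.comap X)] :=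
    condExp_mul_of_stronglyMeasurable_left hf₁sm hT1 hWY1
  have hE2 : (ℙ : Measure Ω)[T₂ | (m𝓧.comap X)]
      =ᵐ[ℙ] (fun ω => (1 - g ω)⁻¹) * (ℙ : Measure Ω)[fun ω => (1 - W ω) * Y₀ ω | (m𝓧.comap X)] :=
    condExp_mul_of_stronglyMeasurable_left hf₂sm hT2 hF2int
  have hE3 : (ℙ : Measure Ω)[T₃ | (m𝓧.comap X)]
      =ᵐ[ℙ] (fun ω => C * (g ω * (1 - g ω))⁻¹) * (ℙ : Measure Ω)[fun ω => W ω - g ω | (m𝓧.comap X)] :=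
    condExp_mul_of_stronglyMeasurable_left hf₃sm hT3 hWg
  -- condexp of the inner integrable functions
  have hF2exp : (ℙ : Measure Ω)[fun ω => (1 - W ω) * Y₀ ω | (m𝓧.comap X)]
      =ᵐ[ℙ] fun ω => ((ℙ : Measure Ω)[Y₀ | (m𝓧.comap X)]) ω - g ω * ((ℙ : Measure Ω)[Y₀ | (m𝓧.comap X)]) ω := by
    have heq : (fun ω => (1 - W ω) * Y₀ ω) = fun ω => Y₀ ω - W ω * Y₀ ω := by
      funext ω; ring
    rw [heq]
    refine (condExp_sub hY₀ hWY0 _).trans ?_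
    filter_upwards [hkey0] with ω hω
    simp only [Pi.sub_apply]
    rw [hω]
  have hWgexp : (ℙ : Measure Ω)[fun ω => W ω - g ω | (m𝓧.comap X)] =ᵐ[ℙ] fun _ => (0:ℝ) := by
    have hgg : (ℙ : Measure Ω)[g | (m𝓧.comap X)] = g :=
      condExp_of_stronglyMeasurable hX.comap_le hgsm hgint
    refine (condExp_sub hWint hgint _).trans ?_
    have : (ℙ : Measure Ω)[W | (m𝓧.comap X)] - (ℙ : Measure Ω)[g | (m𝓧.comap X)] = g - g := by rw [hgg]
    rw [this]
    refine Filter.Eventually.of_forall fun ω => ?_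
    simp
  -- splitting the condexp
  have hsplit : (ℙ : Measure Ω)[fun ω => T₁ ω - T₂ ω - T₃ ω | (m𝓧.comap X)]
      =ᵐ[ℙ] (ℙ : Measure Ω)[T₁ | (m𝓧.comap X)] - (ℙ : Measure Ω)[T₂ | (m𝓧.comap X)] - (ℙ : Measure Ω)[T₃ | (m𝓧.comap X)] :=
    (condExp_sub (hT1.sub hT2) hT3 _).trans ((condExp_sub hT1 hT2 _).sub Filter.EventuallyEq.rfl)
  -- put everything together
  refine (condExp_congr_ae hZeq).trans ?_
  refine hsplit.trans ?_
  filter_upwards [hE1, hE2, hE3, hkey1, hF2exp, hWgexp, hgb] with ω h1 h2 h3 hk1 hf2 hwg hb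
  simp only [Pi.sub_apply, Pi.mul_apply] at h1 h2 h3 ⊢
  rw [h1, h2, h3, hk1, hf2, hwg]
  have hg0 : g ω ≠ 0 := ne_of_gt (lt_of_lt_of_le hε hb.1)
  have hg1 : (1:ℝ) - g ω ≠ 0 := ne_of_gt (by linarith [hb.2, hε])
  field_simp
  ring
end

section
/- Let (Ω, 𝓕, ℙ) be a probability space, X : Ω → 𝓧 a measurable map into a measurable space, W : Ω → ℝ a random variable taking values in {0,1}, and Y₁ : Ω → ℝ an integrable random variable. Let e(X) be a version of the conditional expectation E[W | σ(X)] and suppose there exists ε > 0 with ε ≤ e(X) ≤ 1 − ε almost surely. Assume Y₁ is conditionally independent of W given σ(X). Then, almost surely, E[Y₁·W / e(X) | σ(X)] = E[Y₁ | σ(X)]. -/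
open MeasureTheory ProbabilityTheory

/-- Inverse-propensity-weighting identity for the treated potential outcome:
`E[Y₁·W / e(X) | σ(X)] = E[Y₁ | σ(X)]` a.s. -/
theorem ipw_treated_condExp
    {Ω 𝓧 : Type*} [MeasureSpace Ω] [IsProbabilityMeasure (ℙ : Measure Ω)]
    [StandardBorelSpace Ω]
    [m𝓧 : MeasurableSpace 𝓧]
    (X : Ω → 𝓧) (hX : Measurable X)
    (W Y₁ : Ω → ℝ)
    (hW : Measurable W) (hWbin : ∀ ω, W ω = 0 ∨ W ω = 1)
    (hY₁ : Integrable Y₁ ℙ)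
    (e : Ω → ℝ) (he : e =ᵐ[ℙ] ℙ[W | m𝓧.comap X])
    (ε : ℝ) (hε : 0 < ε)
    (hbound : ∀ᵐ ω ∂ℙ, ε ≤ e ω ∧ e ω ≤ 1 - ε)
    (hindep : CondIndepFun (m𝓧.comap X) hX.comap_le Y₁ W ℙ) :
    ℙ[(fun ω => Y₁ ω * W ω / e ω) | m𝓧.comap X] =ᵐ[ℙ] ℙ[Y₁ | m𝓧.comap X] := by
  have hm : MeasurableSpace.comap X m𝓧 ≤ MeasureSpace.toMeasurableSpace := hX.comap_le
  -- measurable version of Y₁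
  set Y : Ω → ℝ := hY₁.1.mk Y₁ with hY_def
  have hYsm : StronglyMeasurable Y := hY₁.1.stronglyMeasurable_mk
  have hYm : Measurable Y := hYsm.measurable
  have hYY₁ : Y₁ =ᵐ[ℙ] Y := hY₁.1.ae_eq_mk
  have hYint : Integrable Y ℙ := hY₁.congr hYY₁
  have hWabs : ∀ ω, |W ω| ≤ 1 := by
    intro ω; rcases hWbin ω with h | h <;> rw [h] <;> norm_num
  have hWint : Integrable W ℙ := by
    refine Integrable.mono' (integrable_const (1 : ℝ)) hW.aestronglyMeasurable ?_
    exact Filter.Eventually.of_forall fun ω => hWabs ω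
  have hYWint : Integrable (fun ω => Y ω * W ω) ℙ := by
    refine Integrable.mono' hYint.abs (hYm.mul hW).aestronglyMeasurable ?_
    refine Filter.Eventually.of_forall fun ω => ?_
    have : ‖Y ω * W ω‖ = |Y ω| * |W ω| := abs_mul _ _
    rw [this]
    calc |Y ω| * |W ω| ≤ |Y ω| * 1 :=
          mul_le_mul_of_nonneg_left (hWabs ω) (abs_nonneg _)
      _ = |Y ω| := mul_one _
  -- a null measurable superset of {Y₁ ≠ Y}
  obtain ⟨N, hNsub, hNm, hN0⟩ :
      ∃ N, {ω | ¬ Y₁ ω = Y ω} ⊆ N ∧ MeasurableSet N ∧ ℙ N = 0 :=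
    exists_measurable_superset_of_null (ae_iff.mp hYY₁)
  -- the conditional kernel gives zero mass to N, a.e.
  have hκN : ∀ᵐ ω ∂ℙ, condExpKernel ℙ (m𝓧.comap X) ω N = 0 := by
    have h1 : (fun ω => (condExpKernel ℙ (m𝓧.comap X) ω N).toReal) =ᵐ[ℙ] ℙ⟦N | m𝓧.comap X⟧ :=
      condExpKernel_ae_eq_condExp hm hNm
    have h2 : (ℙ⟦N | m𝓧.comap X⟧ : Ω → ℝ) =ᵐ[ℙ] 0 := by
      refine (condExp_congr_ae (g := (0 : Ω → ℝ)) ?_).trans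
        (by rw [condExp_zero])
      have : ∀ᵐ ω ∂ℙ, ω ∉ N := measure_eq_zero_iff_ae_notMem.mp hN0
      filter_upwards [this] with ω hω
      simp [Set.indicator_of_notMem hω]
    filter_upwards [h1.trans h2] with ω hω
    have hne : condExpKernel ℙ (m𝓧.comap X) ω N ≠ ⊤ := measure_ne_top _ _
    simpa [ENNReal.toReal_eq_zero_iff, hne] using hω
  have hYκ : ∀ᵐ ω ∂ℙ, Y₁ =ᵐ[condExpKernel ℙ (m𝓧.comap X) ω] Y := by
    filter_upwards [hκN] with ω hω
    exact ae_iff.mpr (measure_mono_null hNsub hω)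
  -- pairwise independence relations from conditional independence
  have hpair : ∀ q r : ℚ, ∀ᵐ ω ∂ℙ,
      condExpKernel ℙ (m𝓧.comap X) ω (Y₁ ⁻¹' Set.Iio (q : ℝ) ∩ W ⁻¹' Set.Iio (r : ℝ)) =
        condExpKernel ℙ (m𝓧.comap X) ω (Y₁ ⁻¹' Set.Iio (q : ℝ)) *
          condExpKernel ℙ (m𝓧.comap X) ω (W ⁻¹' Set.Iio (r : ℝ)) := by
    intro q r
    exact ae_of_ae_trim hm
      (hindep _ _ ⟨Set.Iio (q : ℝ), measurableSet_Iio, rfl⟩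
        ⟨Set.Iio (r : ℝ), measurableSet_Iio, rfl⟩)
  have hall : ∀ᵐ ω ∂ℙ, ∀ q r : ℚ,
      condExpKernel ℙ (m𝓧.comap X) ω (Y₁ ⁻¹' Set.Iio (q : ℝ) ∩ W ⁻¹' Set.Iio (r : ℝ)) =
        condExpKernel ℙ (m𝓧.comap X) ω (Y₁ ⁻¹' Set.Iio (q : ℝ)) *
          condExpKernel ℙ (m𝓧.comap X) ω (W ⁻¹' Set.Iio (r : ℝ)) := by
    rw [ae_all_iff]; intro q; rw [ae_all_iff]; intro r; exact hpair q r
  -- a.e. independence of Y and W under the conditional kernel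
  have hIndepAE : ∀ᵐ ω ∂ℙ, IndepFun Y W (condExpKernel ℙ (m𝓧.comap X) ω) := by
    filter_upwards [hall, hYκ] with ω hω hYe
    set κ := condExpKernel ℙ (m𝓧.comap X) ω with hκ_def
    haveI : IsProbabilityMeasure κ := IsMarkovKernel.isProbabilityMeasure ω
    set p : Set (Set ℝ) := ⋃ a : ℚ, {Set.Iio (a : ℝ)} with hp_def
    have hgen : (inferInstance : MeasurableSpace ℝ) = .generateFrom p := by
      rw [BorelSpace.measurable_eq (α := ℝ), Real.borel_eq_generateFrom_Iio_rat]
    have hgenY : MeasurableSpace.comap Y (inferInstance : MeasurableSpace ℝ) =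
        .generateFrom (Set.preimage Y '' p) := by
      rw [hgen, MeasurableSpace.comap_generateFrom]
    have hgenW : MeasurableSpace.comap W (inferInstance : MeasurableSpace ℝ) =
        .generateFrom (Set.preimage W '' p) := by
      rw [hgen, MeasurableSpace.comap_generateFrom]
    have hpi : IsPiSystem p := Real.isPiSystem_Iio_rat
    have hsets : IndepSets (Set.preimage Y '' p) (Set.preimage W '' p) κ := by
      rintro s t ⟨s', hs', rfl⟩ ⟨t', ht', rfl⟩
      simp only [hp_def, Set.mem_iUnion, Set.mem_singleton_iff] at hs' ht'
      obtain ⟨q, rfl⟩ := hs'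
      obtain ⟨r, rfl⟩ := ht'
      have hsets_eq : (Y ⁻¹' Set.Iio (q : ℝ) : Set Ω) =ᵐ[κ] Y₁ ⁻¹' Set.Iio (q : ℝ) := by
        filter_upwards [hYe] with x hx
        exact congrArg (· ∈ Set.Iio (q : ℝ)) hx.symm
      have h1 : κ (Y ⁻¹' Set.Iio (q : ℝ) ∩ W ⁻¹' Set.Iio (r : ℝ)) =
          κ (Y₁ ⁻¹' Set.Iio (q : ℝ) ∩ W ⁻¹' Set.Iio (r : ℝ)) :=
        measure_congr (hsets_eq.inter (Filter.EventuallyEq.refl _ _))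
      have h2 : κ (Y ⁻¹' Set.Iio (q : ℝ)) = κ (Y₁ ⁻¹' Set.Iio (q : ℝ)) :=
        measure_congr hsets_eq
      refine Filter.Eventually.of_forall fun _ => ?_
      simp only [Kernel.const_apply]
      rw [h1, h2]
      exact hω q r
    exact IndepSets.indep hYm.comap_le hW.comap_le (hpi.comap Y) (hpi.comap W)
      hgenY hgenW hsets
  -- product formula for the conditional expectation
  have hprod : ℙ[fun ω => Y ω * W ω | m𝓧.comap X] =ᵐ[ℙ]
      fun ω => (ℙ[Y | m𝓧.comap X]) ω * (ℙ[W | m𝓧.comap X]) ω := by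
    have h1 := condExp_ae_eq_integral_condExpKernel hm hYWint
    have h2 := condExp_ae_eq_integral_condExpKernel hm hYint
    have h3 := condExp_ae_eq_integral_condExpKernel hm hWint
    refine h1.trans (.trans ?_ (Filter.EventuallyEq.mul h2.symm h3.symm))
    filter_upwards [hIndepAE] with ω hω
    exact IndepFun.integral_mul_eq_mul_integral hω hYm.aestronglyMeasurable hW.aestronglyMeasurable
  -- put everything together
  set e' : Ω → ℝ := ℙ[W | m𝓧.comap X] with he'_def
  have hεe' : ∀ᵐ ω ∂ℙ, ε ≤ e' ω := by
    filter_upwards [hbound, he] with ω hω h2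
    exact h2 ▸ hω.1
  have hfsm : StronglyMeasurable[m𝓧.comap X] (fun ω => (e' ω)⁻¹) :=
    Measurable.stronglyMeasurable (stronglyMeasurable_condExp.measurable.inv)
  have step1 : (fun ω => Y₁ ω * W ω / e ω) =ᵐ[ℙ]
      (fun ω => (e' ω)⁻¹ * (Y ω * W ω)) := by
    filter_upwards [hYY₁, he] with ω h1 h2
    rw [div_eq_mul_inv, h1, h2, mul_comm]
  have hfg_int : Integrable (fun ω => (e' ω)⁻¹ * (Y ω * W ω)) ℙ := by
    refine Integrable.mono' ((hYint.abs).const_mul ε⁻¹)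
      ((((stronglyMeasurable_condExp.mono hm).measurable.inv).mul
        (hYm.mul hW)).aestronglyMeasurable) ?_
    filter_upwards [hεe'] with ω hω
    have he'pos : 0 < e' ω := lt_of_lt_of_le hε hω
    have h1 : |(e' ω)⁻¹| ≤ ε⁻¹ := by
      rw [abs_of_pos (inv_pos.mpr he'pos)]
      exact inv_anti₀ hε hω
    have h2 : |Y ω * W ω| ≤ |Y ω| := by
      rw [abs_mul]
      calc |Y ω| * |W ω| ≤ |Y ω| * 1 :=
            mul_le_mul_of_nonneg_left (hWabs ω) (abs_nonneg _)
        _ = |Y ω| := mul_one _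
    calc ‖(e' ω)⁻¹ * (Y ω * W ω)‖ = |(e' ω)⁻¹| * |Y ω * W ω| := abs_mul _ _
      _ ≤ ε⁻¹ * |Y ω| := mul_le_mul h1 h2 (abs_nonneg _) (inv_nonneg.mpr hε.le)
  have step2 : ℙ[(fun ω => (e' ω)⁻¹ * (Y ω * W ω)) | m𝓧.comap X] =ᵐ[ℙ]
      (fun ω => (e' ω)⁻¹ * (ℙ[fun ω' => Y ω' * W ω' | m𝓧.comap X]) ω) := by
    have := condExp_mul_of_stronglyMeasurable_left (μ := ℙ) hfsm hfg_int hYWint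
    exact this
  calc ℙ[(fun ω => Y₁ ω * W ω / e ω) | m𝓧.comap X]
      =ᵐ[ℙ] ℙ[(fun ω => (e' ω)⁻¹ * (Y ω * W ω)) | m𝓧.comap X] := condExp_congr_ae step1
    _ =ᵐ[ℙ] fun ω => (e' ω)⁻¹ * (ℙ[fun ω' => Y ω' * W ω' | m𝓧.comap X]) ω := step2
    _ =ᵐ[ℙ] fun ω => (e' ω)⁻¹ * ((ℙ[Y | m𝓧.comap X]) ω * e' ω) := by
        filter_upwards [hprod] with ω hω
        rw [hω]
    _ =ᵐ[ℙ] ℙ[Y | m𝓧.comap X] := by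
        filter_upwards [hεe'] with ω hω
        have hne : e' ω ≠ 0 := (lt_of_lt_of_le hε hω).ne'
        rw [mul_comm ((ℙ[Y | m𝓧.comap X]) ω), ← mul_assoc, inv_mul_cancel₀ hne, one_mul]
    _ =ᵐ[ℙ] ℙ[Y₁ | m𝓧.comap X] := condExp_congr_ae hYY₁.symm
end

section
/- Let (Ω, 𝓕, ℙ) be a probability space, X : Ω → 𝓧 a measurable map into a measurable space, W : Ω → ℝ a random variable taking values in {0,1}, and Y₀ : Ω → ℝ an integrable random variable. Let e(X) be a version of the conditional expectation E[W | σ(X)] and suppose there exists ε > 0 with ε ≤ e(X) ≤ 1 − ε almost surely. Assume Y₀ is conditionally independent of W given σ(X). Then, almost surely, E[Y₀·(1 − W) / (1 − e(X)) | σ(X)] = E[Y₀ | σ(X)]. -/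
open MeasureTheory ProbabilityTheory Filter Set

section Helpers
variable {Ω : Type*} {mΩ : MeasurableSpace Ω} [StandardBorelSpace Ω]
  {μ : Measure Ω} [IsProbabilityMeasure μ]
  {m' : MeasurableSpace Ω} {hm' : m' ≤ mΩ}

theorem condExp_mul_eq_of_condIndepFun
    {Y W : Ω → ℝ} (hY : Measurable[mΩ] Y) (hW : Measurable[mΩ] W)
    (hWbin : ∀ ω, W ω = 0 ∨ W ω = 1) (hYint : Integrable Y μ)
    (hindep : CondIndepFun m' hm' Y W μ) :
    μ[fun ω => Y ω * W ω | m'] =ᵐ[μ] fun ω => (μ[W | m']) ω * (μ[Y | m']) ω := by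
  have hWabs : ∀ ω, |W ω| ≤ 1 := by
    intro ω; rcases hWbin ω with h | h <;> simp [h]
  have hWint : Integrable W μ :=
    Integrable.mono' (integrable_const 1) (hW.aestronglyMeasurable (μ := μ))
      (Eventually.of_forall fun ω => by simpa using hWabs ω)
  have hWind : W = fun ω => (W ⁻¹' {1}).indicator (fun _ => (1 : ℝ)) ω := by
    funext ω
    rcases hWbin ω with h | h
    · have : ω ∉ W ⁻¹' {1} := by simp [Set.mem_preimage, h]
      simp [Set.indicator_of_notMem this, h]
    · have : ω ∈ W ⁻¹' {1} := by simp [Set.mem_preimage, h]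
      simp [Set.indicator_of_mem this, h]
  -- base case: indicators of preimages of Y
  have hbase : ∀ B : Set ℝ, MeasurableSet B →
      μ[fun ω => (Y ⁻¹' B).indicator (fun _ => (1 : ℝ)) ω * W ω | m']
        =ᵐ[μ] fun ω => (μ[(Y ⁻¹' B).indicator (fun _ => (1:ℝ)) | m']) ω * (μ[W | m']) ω := by
    intro B hB
    have h := (condIndepFun_iff_condExp_inter_preimage_eq_mul hY hW).mp hindep B {1} hB
      (measurableSet_singleton 1)
    have heq : (fun ω => (Y ⁻¹' B).indicator (fun _ => (1 : ℝ)) ω * W ω)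
        = ((Y ⁻¹' B ∩ W ⁻¹' {1}).indicator fun _ => (1:ℝ)) := by
      funext ω
      have hw : W ω = (W ⁻¹' {1}).indicator (fun _ => (1:ℝ)) ω := congrFun hWind ω
      by_cases h1 : ω ∈ Y ⁻¹' B <;> by_cases h2 : ω ∈ W ⁻¹' {1} <;>
        simp [Set.indicator_of_mem, Set.indicator_of_notMem, h1, h2, hw, Set.mem_inter_iff]
    have hWc : μ[W | m'] =ᵐ[μ] μ[(W ⁻¹' {1}).indicator (fun _ => (1:ℝ)) | m'] :=
      condExp_congr_ae (Eventually.of_forall fun ω => congrFun hWind ω)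
    rw [heq]
    filter_upwards [h, hWc] with ω h1 h2
    rw [h1, h2]
  have hint1 : ∀ ζ : SimpleFunc ℝ ℝ, Integrable (fun ω => ζ (Y ω)) μ := by
    intro ζ
    obtain ⟨C, hC⟩ := ζ.exists_forall_norm_le
    exact Integrable.mono' (integrable_const C)
      ((ζ.measurable.comp hY).aestronglyMeasurable) (Eventually.of_forall fun ω => hC _)
  have hint2 : ∀ ζ : SimpleFunc ℝ ℝ, Integrable (fun ω => ζ (Y ω) * W ω) μ := by
    intro ζ
    refine Integrable.mono' (hint1 ζ).norm
      (((ζ.measurable.comp hY).mul hW).aestronglyMeasurable) (Eventually.of_forall fun ω => ?_)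
    rw [norm_mul]
    exact mul_le_of_le_one_right (norm_nonneg _) (by rw [Real.norm_eq_abs]; exact hWabs ω)
  -- simple function step
  have hsimple : ∀ φ : SimpleFunc ℝ ℝ,
      μ[fun ω => φ (Y ω) * W ω | m']
        =ᵐ[μ] fun ω => (μ[fun ω' => φ (Y ω') | m']) ω * (μ[W | m']) ω := by
    intro φ
    induction φ using SimpleFunc.induction with
    | @const c s hs =>
      have hcoe : ∀ x : ℝ, (SimpleFunc.piecewise s hs (SimpleFunc.const ℝ c)
          (SimpleFunc.const ℝ 0)) x = c • s.indicator (fun _ => (1:ℝ)) x := by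
        intro x
        by_cases hx : x ∈ s <;>
          simp [SimpleFunc.piecewise_apply, hx, Set.indicator_of_mem, Set.indicator_of_notMem]
      have h1 : (fun ω => (SimpleFunc.piecewise s hs (SimpleFunc.const ℝ c)
            (SimpleFunc.const ℝ 0)) (Y ω) * W ω)
          = c • fun ω => (Y ⁻¹' s).indicator (fun _ => (1:ℝ)) ω * W ω := by
        funext ω
        simp only [hcoe, Pi.smul_apply, smul_eq_mul]
        have : s.indicator (fun _ => (1:ℝ)) (Y ω) = (Y ⁻¹' s).indicator (fun _ => (1:ℝ)) ω := by
          by_cases hx : Y ω ∈ s <;>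
            simp [hx, Set.indicator_of_mem, Set.indicator_of_notMem, Set.mem_preimage]
        rw [this]; ring
      have h2 : (fun ω => (SimpleFunc.piecewise s hs (SimpleFunc.const ℝ c)
            (SimpleFunc.const ℝ 0)) (Y ω))
          = c • fun ω => (Y ⁻¹' s).indicator (fun _ => (1:ℝ)) ω := by
        funext ω
        simp only [hcoe, Pi.smul_apply, smul_eq_mul]
        by_cases hx : Y ω ∈ s <;>
          simp [hx, Set.indicator_of_mem, Set.indicator_of_notMem, Set.mem_preimage]
      rw [h1, h2]
      filter_upwards [condExp_smul (μ := μ) (m := m') c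
          (fun ω => (Y ⁻¹' s).indicator (fun _ => (1:ℝ)) ω * W ω),
        condExp_smul (μ := μ) (m := m') c
          (fun ω => (Y ⁻¹' s).indicator (fun _ => (1:ℝ)) ω),
        hbase s hs] with ω ha hb hc
      rw [ha, hb]
      simp only [Pi.smul_apply, smul_eq_mul]
      rw [hc]; ring
    | @add φ ψ hdisj hφ hψ =>
      have key : (fun ω => (↑(φ + ψ) : ℝ → ℝ) (Y ω) * W ω)
          = (fun ω => φ (Y ω) * W ω) + fun ω => ψ (Y ω) * W ω := by
        funext ω; simp [add_mul]
      have key2 : (fun ω => (↑(φ + ψ) : ℝ → ℝ) (Y ω))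
          = (fun ω => φ (Y ω)) + fun ω => ψ (Y ω) := by
        funext ω; simp
      rw [key, key2]
      filter_upwards [condExp_add (m := m') (hint2 φ) (hint2 ψ),
        condExp_add (m := m') (hint1 φ) (hint1 ψ), hφ, hψ] with ω h1 h2 h3 h4
      rw [h1, h2]
      simp only [Pi.add_apply]
      rw [h3, h4]; ring
  -- bound on the conditional expectation of W
  have hWa : ∀ᵐ ω ∂μ, ‖(μ[W | m']) ω‖ ≤ 1 := by
    have h0 : 0 ≤ᵐ[μ] μ[W | m'] :=
      condExp_nonneg (Eventually.of_forall fun ω => by rcases hWbin ω with h | h <;> simp [h])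
    have h1 : μ[W | m'] ≤ᵐ[μ] μ[fun _ => (1:ℝ) | m'] :=
      condExp_mono hWint (integrable_const 1)
        (Eventually.of_forall fun ω => by rcases hWbin ω with h | h <;> simp [h])
    rw [condExp_const hm'] at h1
    filter_upwards [h0, h1] with ω h0 h1
    have h0' : (0:ℝ) ≤ (μ[W | m']) ω := by simpa using h0
    have h1' : (μ[W | m']) ω ≤ 1 := by simpa using h1
    rw [Real.norm_eq_abs, abs_le]
    constructor <;> linarith
  -- approximation of Y by simple functions
  set φn : ℕ → SimpleFunc ℝ ℝ :=
    fun n => SimpleFunc.approxOn (id : ℝ → ℝ) measurable_id Set.univ 0 (Set.mem_univ 0) n with hφn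
  have hφbound : ∀ n x, ‖φn n x‖ ≤ 2 * ‖x‖ := by
    intro n x
    have := SimpleFunc.norm_approxOn_y₀_le (f := (id : ℝ → ℝ)) measurable_id
      (Set.mem_univ (0:ℝ)) x n
    simp only [sub_zero, id] at this
    linarith
  have hφtend : ∀ x : ℝ, Filter.Tendsto (fun n => φn n x) Filter.atTop (nhds x) := by
    intro x
    have := SimpleFunc.tendsto_approxOn (f := (id : ℝ → ℝ)) measurable_id
      (Set.mem_univ (0:ℝ)) (x := x) (by simp)
    simpa using this
  have hgsint : ∀ n, Integrable ((μ[W | m']) * fun ω => φn n (Y ω)) μ := by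
    intro n
    refine Integrable.mono' (hint1 (φn n)).norm
      (((stronglyMeasurable_condExp.mono hm').aestronglyMeasurable).mul
        ((φn n).measurable.comp hY).aestronglyMeasurable) ?_
    filter_upwards [hWa] with ω hω
    simp only [Pi.mul_apply, norm_mul]
    exact mul_le_of_le_one_left (norm_nonneg _) hω |>.trans le_rfl
  have main := tendsto_condExp_unique (μ := μ) (m := m')
    (fun n ω => φn n (Y ω) * W ω) (fun n => (μ[W | m']) * fun ω => φn n (Y ω))
    (fun ω => Y ω * W ω) ((μ[W | m']) * Y)
    (fun n => hint2 (φn n)) hgsint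
    (Eventually.of_forall fun ω => (hφtend (Y ω)).mul_const (W ω))
    (Eventually.of_forall fun ω => ((hφtend (Y ω)).const_mul _))
    (fun ω => 2 * ‖Y ω‖) (hYint.norm.const_mul 2)
    (fun ω => 2 * ‖Y ω‖) (hYint.norm.const_mul 2)
    (fun n => Eventually.of_forall fun ω => by
      rw [norm_mul]
      calc ‖φn n (Y ω)‖ * ‖W ω‖ ≤ ‖φn n (Y ω)‖ * 1 := by
            have := hWabs ω; rw [← Real.norm_eq_abs] at this
            exact mul_le_mul_of_nonneg_left this (norm_nonneg _)
        _ ≤ 2 * ‖Y ω‖ := by rw [mul_one]; exact hφbound n (Y ω))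
    (fun n => by
      filter_upwards [hWa] with ω hω
      simp only [Pi.mul_apply, norm_mul]
      calc ‖(μ[W | m']) ω‖ * ‖φn n (Y ω)‖ ≤ 1 * ‖φn n (Y ω)‖ :=
            mul_le_mul_of_nonneg_right hω (norm_nonneg _)
        _ ≤ 2 * ‖Y ω‖ := by rw [one_mul]; exact hφbound n (Y ω))
    (fun n => by
      have ha := hsimple (φn n)
      have hb := condExp_mul_of_stronglyMeasurable_left (m := m') (μ := μ)
        stronglyMeasurable_condExp (hgsint n) (hint1 (φn n))
      filter_upwards [ha, hb] with ω ha hb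
      rw [ha, hb]
      simp only [Pi.mul_apply]
      ring)
  have hfinal : Integrable ((μ[W | m']) * Y) μ := by
    refine Integrable.mono' hYint.norm
      (((stronglyMeasurable_condExp.mono hm').aestronglyMeasurable).mul
        hYint.aestronglyMeasurable) ?_
    filter_upwards [hWa] with ω hω
    simp only [Pi.mul_apply, norm_mul]
    exact mul_le_of_le_one_left (norm_nonneg _) hω
  have hpull := condExp_mul_of_stronglyMeasurable_left (m := m') (μ := μ)
    stronglyMeasurable_condExp hfinal hYint
  filter_upwards [main, hpull] with ω h1 h2
  rw [h1, h2]
  simp [Pi.mul_apply]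

theorem condIndepFun_of_ae_eq
    {Ω : Type*} {m' : MeasurableSpace Ω} {mΩ : MeasurableSpace Ω} [StandardBorelSpace Ω]
    {hm' : m' ≤ mΩ} {μ : Measure Ω} [IsProbabilityMeasure μ]
    {Y Y' W : Ω → ℝ} (hYY' : Y =ᵐ[μ] Y')
    (hindep : CondIndepFun m' hm' Y W μ) :
    CondIndepFun m' hm' Y' W μ := by
  have hN : MeasurableSet[mΩ] (toMeasurable μ {x | Y x ≠ Y' x}) := measurableSet_toMeasurable _ _
  have hNnull : μ (toMeasurable μ {x | Y x ≠ Y' x}) = 0 := by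
    rw [measure_toMeasurable]
    exact hYY'
  have hker : ∀ᵐ ω ∂(μ.trim hm'),
      condExpKernel μ m' ω (toMeasurable μ {x | Y x ≠ Y' x}) = 0 := by
    have h1 : (fun ω => (condExpKernel μ m' ω (toMeasurable μ {x | Y x ≠ Y' x})).toReal)
        =ᵐ[μ] μ[(toMeasurable μ {x | Y x ≠ Y' x}).indicator (fun _ => (1:ℝ)) | m'] :=
      condExpKernel_ae_eq_condExp hm' hN
    have h2 : μ[(toMeasurable μ {x | Y x ≠ Y' x}).indicator (fun _ => (1:ℝ)) | m']
        =ᵐ[μ] 0 := by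
      have : (toMeasurable μ {x | Y x ≠ Y' x}).indicator (fun _ => (1:ℝ)) =ᵐ[μ] 0 := by
        have : ∀ᵐ x ∂μ, x ∉ toMeasurable μ {x | Y x ≠ Y' x} := by
          rw [ae_iff]
          simpa using hNnull
        filter_upwards [this] with x hx
        simp [Set.indicator_of_notMem hx]
      calc μ[(toMeasurable μ {x | Y x ≠ Y' x}).indicator (fun _ => (1:ℝ)) | m']
          =ᵐ[μ] μ[(0 : Ω → ℝ) | m'] := condExp_congr_ae this
        _ = 0 := condExp_zero
    have h3 : (fun ω => (condExpKernel μ m' ω (toMeasurable μ {x | Y x ≠ Y' x})).toReal)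
        =ᵐ[μ] (0 : Ω → ℝ) := h1.trans h2
    have h4 : (fun ω => (condExpKernel μ m' ω (toMeasurable μ {x | Y x ≠ Y' x})).toReal)
        =ᵐ[μ.trim hm'] (0 : Ω → ℝ) := by
      rw [StronglyMeasurable.ae_eq_trim_iff hm'
        ((measurable_condExpKernel hN).ennreal_toReal.stronglyMeasurable)
        stronglyMeasurable_zero]
      exact h3
    filter_upwards [h4] with ω hω
    have hne : condExpKernel μ m' ω (toMeasurable μ {x | Y x ≠ Y' x}) ≠ ⊤ :=
      measure_ne_top _ _
    simpa [ENNReal.toReal_eq_zero_iff, hne] using hω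
  refine Kernel.IndepFun.congr' hindep ?_ ?_
  · filter_upwards [hker] with ω hω
    rw [Filter.EventuallyEq, ae_iff]
    exact measure_mono_null (fun x hx => subset_toMeasurable μ _ hx) hω
  · exact Eventually.of_forall fun ω => Filter.EventuallyEq.rfl


end Helpers

/-- Inverse-propensity-weighting identity for the control potential outcome:
`E[Y₀·(1 − W) / (1 − e(X)) | σ(X)] = E[Y₀ | σ(X)]` a.s. -/
theorem ipw_control_condExp
    {Ω 𝓧 : Type*} [MeasureSpace Ω] [IsProbabilityMeasure (ℙ : Measure Ω)]
    [StandardBorelSpace Ω]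
    [m𝓧 : MeasurableSpace 𝓧]
    (X : Ω → 𝓧) (hX : Measurable X)
    (W Y₀ : Ω → ℝ)
    (hW : Measurable W) (hWbin : ∀ ω, W ω = 0 ∨ W ω = 1)
    (hY₀ : Integrable Y₀ ℙ)
    (e : Ω → ℝ) (he : e =ᵐ[ℙ] ℙ[W | m𝓧.comap X])
    (ε : ℝ) (hε : 0 < ε)
    (hbound : ∀ᵐ ω ∂ℙ, ε ≤ e ω ∧ e ω ≤ 1 - ε)
    (hindep : CondIndepFun (m𝓧.comap X) hX.comap_le Y₀ W ℙ) :
    ℙ[(fun ω => Y₀ ω * (1 - W ω) / (1 - e ω)) | m𝓧.comap X]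
      =ᵐ[ℙ] ℙ[Y₀ | m𝓧.comap X] := by
  have hm' := hX.comap_le
  have hsm : AEStronglyMeasurable Y₀ ℙ := hY₀.1
  set Y' := hsm.mk Y₀ with hY'def
  have hY'm : Measurable Y' := hsm.stronglyMeasurable_mk.measurable
  have hYY' : Y₀ =ᵐ[ℙ] Y' := hsm.ae_eq_mk
  have hY'int : Integrable Y' ℙ := hY₀.congr hYY'
  have hindep' : CondIndepFun (m𝓧.comap X) hX.comap_le Y' W ℙ := condIndepFun_of_ae_eq hYY' hindep
  have hprod := condExp_mul_eq_of_condIndepFun hY'm hW hWbin hY'int hindep'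
  set e' := ℙ[W | (m𝓧.comap X)] with he'def
  have hW1 : ∀ ω, |1 - W ω| ≤ 1 := by
    intro ω; rcases hWbin ω with h | h <;> simp [h]
  have hYWint : Integrable (fun ω => Y' ω * W ω) ℙ := by
    refine Integrable.mono' hY'int.norm ((hY'm.mul hW).aestronglyMeasurable)
      (Filter.Eventually.of_forall fun ω => ?_)
    rw [norm_mul]
    refine mul_le_of_le_one_right (norm_nonneg _) ?_
    rw [Real.norm_eq_abs]
    rcases hWbin ω with h | h <;> simp [h]
  have hZint : Integrable (fun ω => Y' ω * (1 - W ω)) ℙ := by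
    refine Integrable.mono' hY'int.norm
      ((hY'm.mul (measurable_const.sub hW)).aestronglyMeasurable)
      (Filter.Eventually.of_forall fun ω => ?_)
    rw [norm_mul]
    exact mul_le_of_le_one_right (norm_nonneg _) (by rw [Real.norm_eq_abs]; exact hW1 ω)
  have hZ : ℙ[fun ω => Y' ω * (1 - W ω) | (m𝓧.comap X)] =ᵐ[ℙ] fun ω => (ℙ[Y' | (m𝓧.comap X)]) ω * (1 - e' ω) := by
    have hsplit : (fun ω => Y' ω * (1 - W ω)) = Y' - fun ω => Y' ω * W ω := by
      funext ω; simp; ring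
    rw [hsplit]
    filter_upwards [condExp_sub (m := (m𝓧.comap X)) hY'int hYWint, hprod] with ω h1 h2
    rw [h1]
    simp only [Pi.sub_apply]
    rw [h2]
    ring
  have he'b : ∀ᵐ ω ∂ℙ, ε ≤ e' ω ∧ e' ω ≤ 1 - ε := by
    filter_upwards [hbound, he] with ω h1 h2
    rw [← h2]
    exact h1
  set g : Ω → ℝ := fun ω => (1 - e' ω)⁻¹ with hgdef
  have hgsm : StronglyMeasurable[(m𝓧.comap X)] g :=
    ((measurable_const.sub stronglyMeasurable_condExp.measurable).inv).stronglyMeasurable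
  have hgZint : Integrable (g * fun ω => Y' ω * (1 - W ω)) ℙ := by
    refine Integrable.mono' (hY'int.norm.const_mul ε⁻¹)
      (((hgsm.mono hm').aestronglyMeasurable).mul
        ((hY'm.mul (measurable_const.sub hW)).aestronglyMeasurable)) ?_
    filter_upwards [he'b] with ω hω
    simp only [Pi.mul_apply]
    rw [norm_mul]
    have h1e : ε ≤ 1 - e' ω := by linarith [hω.2]
    have hg1 : ‖g ω‖ ≤ ε⁻¹ := by
      rw [hgdef]
      simp only [Real.norm_eq_abs]
      rw [abs_of_nonneg (inv_nonneg.mpr (by linarith))]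
      exact inv_anti₀ hε h1e
    have hg2 : ‖Y' ω * (1 - W ω)‖ ≤ ‖Y' ω‖ := by
      rw [norm_mul]
      exact mul_le_of_le_one_right (norm_nonneg _) (by rw [Real.norm_eq_abs]; exact hW1 ω)
    calc ‖g ω‖ * ‖Y' ω * (1 - W ω)‖ ≤ ε⁻¹ * ‖Y' ω‖ :=
      mul_le_mul hg1 hg2 (norm_nonneg _) (by positivity)
    _ = ε⁻¹ * ‖Y' ω‖ := rfl
  have hpull := condExp_mul_of_stronglyMeasurable_left (m := (m𝓧.comap X)) hgsm hgZint hZint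
  have hLHS : (fun ω => Y₀ ω * (1 - W ω) / (1 - e ω))
      =ᵐ[ℙ] g * fun ω => Y' ω * (1 - W ω) := by
    filter_upwards [he, hYY'] with ω h1 h2
    simp only [Pi.mul_apply, hgdef]
    rw [h1, h2, div_eq_mul_inv]
    ring
  have hstart := condExp_congr_ae (m := (m𝓧.comap X)) hLHS
  have hend : ℙ[Y' | (m𝓧.comap X)] =ᵐ[ℙ] ℙ[Y₀ | (m𝓧.comap X)] := condExp_congr_ae hYY'.symm
  filter_upwards [hstart, hpull, hZ, he'b, hend] with ω h1 h2 h3 h4 h5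
  rw [h1, h2]
  simp only [Pi.mul_apply]
  rw [h3, ← h5]
  have h1e : (1 : ℝ) - e' ω ≠ 0 := by
    have := h4.2
    intro hc
    have : ε ≤ 0 := by linarith
    linarith
  rw [hgdef]
  field_simp
end

section
/- Let (Ω, 𝓕, ℙ) be a probability space, X : Ω → 𝓧 a measurable map into a measurable space, W : Ω → ℝ a random variable taking values in {0,1}, and Y₀, Y₁ : Ω → ℝ integrable random variables. Let e(X) be a version of the conditional expectation E[W | σ(X)] and suppose there exists ε > 0 with ε ≤ e(X) ≤ 1 − ε almost surely. Assume the pair (Y₀, Y₁) is conditionally independent of W given σ(X). Define Y^obs = W·Y₁ + (1−W)·Y₀ and, for a constant C ∈ ℝ, Ẑ* = (Y^obs − C)·(W − e(X)) / (e(X)·(1 − e(X))). Then the unconditional expectation satisfies E[Ẑ*] = E[Y₁] − E[Y₀]. -/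
open MeasureTheory ProbabilityTheory

open Set Filter

/-- Integrating a bounded `m`-measurable function against `f` equals integrating it
against the conditional expectation of `f`. -/
lemma aux_integral_mul_condexp {Ω : Type*} {m : MeasurableSpace Ω} [mΩ : MeasurableSpace Ω]
    {μ : Measure Ω} [IsProbabilityMeasure μ] (hm : m ≤ mΩ)
    {h f : Ω → ℝ} (hh : StronglyMeasurable[m] h) {K : ℝ} (hhb : ∀ ω, |h ω| ≤ K)
    (hf : Integrable f μ) :
    ∫ ω, h ω * f ω ∂μ = ∫ ω, h ω * (μ[f|m]) ω ∂μ := by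
  have hhm : AEStronglyMeasurable h μ := (hh.mono hm).aestronglyMeasurable
  have hint : Integrable (h * f) μ := hf.bdd_mul (c := K) hhm (ae_of_all _ fun ω => by
    simpa [Real.norm_eq_abs] using hhb ω)
  have h1 := condExp_mul_of_stronglyMeasurable_left hh hint hf
  calc ∫ ω, h ω * f ω ∂μ = ∫ ω, (h * f) ω ∂μ := rfl
    _ = ∫ ω, (μ[h * f|m]) ω ∂μ := (integral_condExp hm).symm
    _ = ∫ ω, (h * (μ[f|m])) ω ∂μ := integral_congr_ae h1
    _ = ∫ ω, h ω * (μ[f|m]) ω ∂μ := rfl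

/-- Conditional independence is stable under a.e. modification of the first function. -/
lemma aux_condIndepFun_ae {Ω : Type*} {m : MeasurableSpace Ω} [mΩ : MeasurableSpace Ω]
    [StandardBorelSpace Ω] {μ : Measure Ω} [IsFiniteMeasure μ] (hm : m ≤ mΩ)
    {β β' : Type*} [MeasurableSpace β] [MeasurableSpace β']
    {f f' : Ω → β} {g : Ω → β'}
    (h : CondIndepFun m hm f g μ) (hff' : f =ᵐ[μ] f') :
    CondIndepFun m hm f' g μ := by
  set N := toMeasurable μ {a | ¬ f a = f' a} with hNdef
  have hNsub : {a | ¬ f a = f' a} ⊆ N := subset_toMeasurable μ _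
  have hNmeas : MeasurableSet[mΩ] N := measurableSet_toMeasurable μ _
  have hN0 : μ N = 0 := by rw [hNdef, measure_toMeasurable]; exact ae_iff.mp hff'
  have h3 : (μ⟦N|m⟧) =ᵐ[μ] 0 := by
    have h0 : (N.indicator (fun _ => (1:ℝ))) =ᵐ[μ] 0 := by
      have hae : ∀ᵐ ω ∂μ, ω ∉ N := by
        rw [ae_iff]; simpa using hN0
      filter_upwards [hae] with ω hω
      simp [Set.indicator_apply, hω]
    exact (condExp_congr_ae h0).trans (by rw [condExp_zero])
  have h1 : ∀ᵐ a ∂μ, condExpKernel μ m a N = 0 := by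
    filter_upwards [(condExpKernel_ae_eq_condExp hm hNmeas).trans h3] with a ha
    have hfin : condExpKernel μ m a N ≠ ⊤ := measure_ne_top _ _
    simpa [measureReal_def, ENNReal.toReal_eq_zero_iff, hfin] using ha
  have hmeasN : Measurable[m] fun a => condExpKernel μ m a N :=
    measurable_condExpKernel hNmeas
  have h2 : ∀ᵐ a ∂(μ.trim hm), condExpKernel μ m a N = 0 := by
    rw [ae_iff]
    have hset : MeasurableSet[m] {a | ¬ condExpKernel μ m a N = 0} := by
      have := (hmeasN (measurableSet_singleton (0 : ENNReal))).compl
      simpa [Set.preimage, Set.compl_setOf] using this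
    rw [trim_measurableSet_eq hm hset]
    exact ae_iff.mp h1
  refine Kernel.IndepFun.congr' h ?_ (Eventually.of_forall fun a => EventuallyEq.rfl)
  filter_upwards [h2] with a ha
  exact ae_iff.mpr (measure_mono_null hNsub ha)

/-- Key lemma: for a bounded `m`-measurable `g`, we can replace the binary treatment `W`
by (a bounded version of) its conditional expectation in integrals against `φ ∘ Z`,
when `Z` and `W` are conditionally independent given `m`. -/
lemma aux_key {Ω : Type*} {m : MeasurableSpace Ω} [mΩ : MeasurableSpace Ω]
    [StandardBorelSpace Ω] {μ : Measure Ω} [IsProbabilityMeasure μ] (hm : m ≤ mΩ)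
    {W : Ω → ℝ} (hW : Measurable W) (hWbin : ∀ ω, W ω = 0 ∨ W ω = 1)
    {𝓩 : Type*} [m𝓩 : MeasurableSpace 𝓩] {Z : Ω → 𝓩} (hZ : Measurable Z)
    (hindep : CondIndepFun m hm Z W μ)
    {g : Ω → ℝ} (hg : StronglyMeasurable[m] g) {K : ℝ} (hK : 0 ≤ K) (hgb : ∀ ω, |g ω| ≤ K)
    {ec : Ω → ℝ} (hec : StronglyMeasurable[m] ec) (hecb : ∀ ω, |ec ω| ≤ 1)
    (hecW : ec =ᵐ[μ] μ[W|m])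
    {φ : 𝓩 → ℝ} (hφ : Integrable φ (μ.map Z)) :
    ∫ ω, g ω * W ω * φ (Z ω) ∂μ = ∫ ω, g ω * ec ω * φ (Z ω) ∂μ := by
  have hW1 : ∀ ω, |W ω| ≤ 1 := fun ω => by rcases hWbin ω with h | h <;> simp [h]
  have hgWb : ∀ ω, ‖g ω * W ω‖ ≤ K := fun ω => by
    rw [Real.norm_eq_abs, abs_mul]
    calc |g ω| * |W ω| ≤ K * 1 := mul_le_mul (hgb ω) (hW1 ω) (abs_nonneg _) hK
      _ = K := mul_one K
  have hgecb : ∀ ω, ‖g ω * ec ω‖ ≤ K := fun ω => by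
    rw [Real.norm_eq_abs, abs_mul]
    calc |g ω| * |ec ω| ≤ K * 1 := mul_le_mul (hgb ω) (hecb ω) (abs_nonneg _) hK
      _ = K := mul_one K
  have hgm : AEStronglyMeasurable (fun ω => g ω * W ω) μ :=
    (((hg.mono hm).measurable.mul hW)).aestronglyMeasurable
  have hgecm : AEStronglyMeasurable (fun ω => g ω * ec ω) μ :=
    ((hg.mul hec).mono hm).aestronglyMeasurable
  have hcomp : ∀ {ψ : 𝓩 → ℝ}, Integrable ψ (μ.map Z) → Integrable (fun ω => ψ (Z ω)) μ :=
    fun {ψ} hψ => (integrable_map_measure hψ.aestronglyMeasurable hZ.aemeasurable).mp hψ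
  have hintW : ∀ {ψ : 𝓩 → ℝ}, Integrable ψ (μ.map Z) →
      Integrable (fun ω => g ω * W ω * ψ (Z ω)) μ :=
    fun {ψ} hψ => (hcomp hψ).bdd_mul (c := K) hgm (ae_of_all _ hgWb)
  have hintec : ∀ {ψ : 𝓩 → ℝ}, Integrable ψ (μ.map Z) →
      Integrable (fun ω => g ω * ec ω * ψ (Z ω)) μ :=
    fun {ψ} hψ => (hcomp hψ).bdd_mul (c := K) hgecm (ae_of_all _ hgecb)
  revert hφ
  refine fun hφ => Integrable.induction (μ := μ.map Z)
    (P := fun ψ => ∫ ω, g ω * W ω * ψ (Z ω) ∂μ = ∫ ω, g ω * ec ω * ψ (Z ω) ∂μ) ?_ ?_ ?_ ?_ hφ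
  · -- indicators
    intro c s hs _
    have hTmeas : MeasurableSet (Z ⁻¹' s) := hZ hs
    have hA : MeasurableSet (W ⁻¹' {1}) := hW (measurableSet_singleton 1)
    have hL : ∀ ω, g ω * W ω * (s.indicator (fun _ => c) (Z ω))
        = c * (g ω * (Z ⁻¹' s ∩ W ⁻¹' {1}).indicator (fun _ => (1:ℝ)) ω) := by
      intro ω
      by_cases hωs : Z ω ∈ s <;> rcases hWbin ω with h | h <;>
        simp [Set.indicator_apply, Set.mem_preimage, h, hωs] <;> ring
    have hR : ∀ ω, g ω * ec ω * (s.indicator (fun _ => c) (Z ω))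
        = c * ((g ω * ec ω) * (Z ⁻¹' s).indicator (fun _ => (1:ℝ)) ω) := by
      intro ω
      by_cases hωs : Z ω ∈ s <;> simp [Set.indicator_apply, Set.mem_preimage, hωs] <;> ring
    have hind1 : Integrable ((Z ⁻¹' s ∩ W ⁻¹' {1}).indicator (fun _ => (1:ℝ))) μ :=
      (integrable_const (1:ℝ)).indicator (hTmeas.inter hA)
    have hindT : Integrable ((Z ⁻¹' s).indicator (fun _ => (1:ℝ))) μ :=
      (integrable_const (1:ℝ)).indicator hTmeas
    have hci := (condIndepFun_iff_condExp_inter_preimage_eq_mul hZ hW).mp hindep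
      s {1} hs (measurableSet_singleton 1)
    have hWind : (W ⁻¹' {1}).indicator (fun _ => (1:ℝ)) = W := by
      funext ω; rcases hWbin ω with h | h <;>
        simp [Set.indicator_apply, Set.mem_preimage, h]
    have hWm : (μ⟦W ⁻¹' {1}|m⟧) = μ[W|m] := by rw [hWind]
    have hgb' : ∀ ω, |g ω * ec ω| ≤ K := fun ω => by
      have := hgecb ω; rwa [Real.norm_eq_abs] at this
    calc ∫ ω, g ω * W ω * (s.indicator (fun _ => c) (Z ω)) ∂μ
        = ∫ ω, c * (g ω * (Z ⁻¹' s ∩ W ⁻¹' {1}).indicator (fun _ => (1:ℝ)) ω) ∂μ :=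
          integral_congr_ae (Eventually.of_forall hL)
      _ = c * ∫ ω, g ω * (Z ⁻¹' s ∩ W ⁻¹' {1}).indicator (fun _ => (1:ℝ)) ω ∂μ :=
          integral_const_mul c _
      _ = c * ∫ ω, g ω * (μ[(Z ⁻¹' s ∩ W ⁻¹' {1}).indicator (fun _ => (1:ℝ))|m]) ω ∂μ := by
          rw [aux_integral_mul_condexp hm hg hgb hind1]
      _ = c * ∫ ω, (g ω * ec ω) * ((μ[(Z ⁻¹' s).indicator (fun _ => (1:ℝ))|m]) ω) ∂μ := by
          refine congrArg (c * ·) (integral_congr_ae ?_)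
          filter_upwards [hci, hecW] with ω h1 h2
          have h3 : (μ⟦W ⁻¹' {1}|m⟧) ω = ec ω := by rw [hWm, ← h2]
          rw [h1, h3]; ring
      _ = c * ∫ ω, (g ω * ec ω) * ((Z ⁻¹' s).indicator (fun _ => (1:ℝ)) ω) ∂μ := by
          rw [← aux_integral_mul_condexp (h := fun ω => g ω * ec ω) hm (hg.mul hec) hgb' hindT]
      _ = ∫ ω, c * ((g ω * ec ω) * ((Z ⁻¹' s).indicator (fun _ => (1:ℝ)) ω)) ∂μ :=
          (integral_const_mul c _).symm
      _ = ∫ ω, g ω * ec ω * (s.indicator (fun _ => c) (Z ω)) ∂μ :=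
          integral_congr_ae (Eventually.of_forall fun ω => (hR ω).symm)
  · -- additivity
    intro f₁ f₂ _ hf₁ hf₂ h₁ h₂
    have e₁ := hintW hf₁; have e₂ := hintW hf₂
    have e₁' := hintec hf₁; have e₂' := hintec hf₂
    calc ∫ ω, g ω * W ω * (f₁ + f₂) (Z ω) ∂μ
        = ∫ ω, (g ω * W ω * f₁ (Z ω) + g ω * W ω * f₂ (Z ω)) ∂μ := by
          refine integral_congr_ae (Eventually.of_forall fun ω => ?_)
          simp [Pi.add_apply]; ring
      _ = (∫ ω, g ω * W ω * f₁ (Z ω) ∂μ) + ∫ ω, g ω * W ω * f₂ (Z ω) ∂μ :=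
          integral_add e₁ e₂
      _ = (∫ ω, g ω * ec ω * f₁ (Z ω) ∂μ) + ∫ ω, g ω * ec ω * f₂ (Z ω) ∂μ := by rw [h₁, h₂]
      _ = ∫ ω, (g ω * ec ω * f₁ (Z ω) + g ω * ec ω * f₂ (Z ω)) ∂μ :=
          (integral_add e₁' e₂').symm
      _ = ∫ ω, g ω * ec ω * (f₁ + f₂) (Z ω) ∂μ := by
          refine integral_congr_ae (Eventually.of_forall fun ω => ?_)
          simp [Pi.add_apply]; ring
  · -- closedness
    have hlip : ∀ (h : Ω → ℝ), AEStronglyMeasurable h μ → (∀ ω, ‖h ω‖ ≤ K) →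
        LipschitzWith (Real.toNNReal K)
          (fun f : Lp ℝ 1 (μ.map Z) => ∫ ω, h ω * f (Z ω) ∂μ) := by
      intro h hmeas hb
      refine LipschitzWith.of_dist_le_mul fun f f' => ?_
      have hfi : Integrable (fun ω => (f : 𝓩 → ℝ) (Z ω)) μ := hcomp (L1.integrable_coeFn f)
      have hfi' : Integrable (fun ω => (f' : 𝓩 → ℝ) (Z ω)) μ := hcomp (L1.integrable_coeFn f')
      have hint1 : Integrable (fun ω => h ω * (f : 𝓩 → ℝ) (Z ω)) μ := hfi.bdd_mul (c := K) hmeas (ae_of_all _ hb)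
      have hint2 : Integrable (fun ω => h ω * (f' : 𝓩 → ℝ) (Z ω)) μ := hfi'.bdd_mul (c := K) hmeas (ae_of_all _ hb)
      rw [Real.dist_eq, ← integral_sub hint1 hint2]
      have hd : Integrable (fun ω => (f : 𝓩 → ℝ) (Z ω) - (f' : 𝓩 → ℝ) (Z ω)) μ := hfi.sub hfi'
      have hdistm : AEStronglyMeasurable (fun z => dist ((f : 𝓩 → ℝ) z) ((f' : 𝓩 → ℝ) z))
          (μ.map Z) := by
        simpa [dist_eq_norm] using
          ((Lp.aestronglyMeasurable f).sub (Lp.aestronglyMeasurable f')).norm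
      calc |∫ ω, (h ω * (f : 𝓩 → ℝ) (Z ω) - h ω * (f' : 𝓩 → ℝ) (Z ω)) ∂μ|
          ≤ ∫ ω, |h ω * (f : 𝓩 → ℝ) (Z ω) - h ω * (f' : 𝓩 → ℝ) (Z ω)| ∂μ := by
            simpa [Real.norm_eq_abs] using
              norm_integral_le_integral_norm
                (fun ω => h ω * (f : 𝓩 → ℝ) (Z ω) - h ω * (f' : 𝓩 → ℝ) (Z ω)) (μ := μ)
        _ ≤ ∫ ω, K * |(f : 𝓩 → ℝ) (Z ω) - (f' : 𝓩 → ℝ) (Z ω)| ∂μ := by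
            refine integral_mono (hint1.sub hint2).abs (hd.abs.const_mul K) fun ω => ?_
            rw [← mul_sub, abs_mul]
            exact mul_le_mul_of_nonneg_right (by simpa [Real.norm_eq_abs] using hb ω)
              (abs_nonneg _)
        _ = K * ∫ ω, |(f : 𝓩 → ℝ) (Z ω) - (f' : 𝓩 → ℝ) (Z ω)| ∂μ := integral_const_mul K _
        _ = K * ∫ ω, dist ((f : 𝓩 → ℝ) (Z ω)) ((f' : 𝓩 → ℝ) (Z ω)) ∂μ := by
            simp_rw [Real.dist_eq]
        _ = K * ∫ z, dist ((f : 𝓩 → ℝ) z) ((f' : 𝓩 → ℝ) z) ∂(μ.map Z) := by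
            rw [integral_map hZ.aemeasurable hdistm]
        _ = K * dist f f' := by rw [L1.dist_eq_integral_dist]
        _ = Real.toNNReal K * dist f f' := by rw [Real.coe_toNNReal K hK]
    exact isClosed_eq
      ((hlip (fun ω => g ω * W ω) hgm hgWb).continuous)
      ((hlip (fun ω => g ω * ec ω) hgecm hgecb).continuous)
  · -- a.e. congruence
    intro f f' hff' _ hPf
    have h1 : ∀ᵐ ω ∂μ, f (Z ω) = f' (Z ω) := ae_of_ae_map hZ.aemeasurable hff'
    have eL : ∫ ω, g ω * W ω * f' (Z ω) ∂μ = ∫ ω, g ω * W ω * f (Z ω) ∂μ :=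
      integral_congr_ae (by filter_upwards [h1] with ω hω; rw [hω])
    have eR : ∫ ω, g ω * ec ω * f (Z ω) ∂μ = ∫ ω, g ω * ec ω * f' (Z ω) ∂μ :=
      integral_congr_ae (by filter_upwards [h1] with ω hω; rw [hω])
    rw [eL, hPf, eR]

/-- Unconditional unbiasedness of the constant-shifted transformed outcome:
`E[Ẑ*] = E[Y₁] − E[Y₀]`. -/
theorem transformed_outcome_shifted_expectation
    {Ω 𝓧 : Type*} [MeasureSpace Ω] [IsProbabilityMeasure (ℙ : Measure Ω)]
    [StandardBorelSpace Ω]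
    [m𝓧 : MeasurableSpace 𝓧]
    (X : Ω → 𝓧) (hX : Measurable X)
    (W Y₀ Y₁ : Ω → ℝ)
    (hW : Measurable W) (hWbin : ∀ ω, W ω = 0 ∨ W ω = 1)
    (hY₀ : Integrable Y₀ ℙ) (hY₁ : Integrable Y₁ ℙ)
    (e : Ω → ℝ) (he : e =ᵐ[ℙ] ℙ[W | m𝓧.comap X])
    (ε : ℝ) (hε : 0 < ε)
    (hbound : ∀ᵐ ω ∂ℙ, ε ≤ e ω ∧ e ω ≤ 1 - ε)
    (hunconf : CondIndepFun (m𝓧.comap X) hX.comap_le (fun ω => (Y₀ ω, Y₁ ω)) W ℙ)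
    (C : ℝ) :
    ∫ ω, ((W ω * Y₁ ω + (1 - W ω) * Y₀ ω) - C) * (W ω - e ω) /
        (e ω * (1 - e ω)) ∂ℙ
      = (∫ ω, Y₁ ω ∂ℙ) - ∫ ω, Y₀ ω ∂ℙ := by
  -- measurable modifications of Y₀ and Y₁
  obtain ⟨Y₀', hY₀'sm, hY₀eq⟩ : ∃ f, StronglyMeasurable f ∧ Y₀ =ᵐ[ℙ] f :=
    ⟨hY₀.1.mk Y₀, hY₀.1.stronglyMeasurable_mk, hY₀.1.ae_eq_mk⟩
  obtain ⟨Y₁', hY₁'sm, hY₁eq⟩ : ∃ f, StronglyMeasurable f ∧ Y₁ =ᵐ[ℙ] f :=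
    ⟨hY₁.1.mk Y₁, hY₁.1.stronglyMeasurable_mk, hY₁.1.ae_eq_mk⟩
  have hY₀'int : Integrable Y₀' ℙ := hY₀.congr hY₀eq
  have hY₁'int : Integrable Y₁' ℙ := hY₁.congr hY₁eq
  have hZmeas : Measurable (fun ω => (Y₀' ω, Y₁' ω)) :=
    hY₀'sm.measurable.prodMk hY₁'sm.measurable
  haveI : IsProbabilityMeasure (Measure.map (fun ω => (Y₀' ω, Y₁' ω)) ℙ) :=
    Measure.isProbabilityMeasure_map hZmeas.aemeasurable
  -- ε ≤ 1 - ε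
  have hε2 : ε ≤ 1 - ε := by
    obtain ⟨ω, h1, h2⟩ := hbound.exists
    linarith
  -- a clamped version of the propensity score
  obtain ⟨ec, hecm, hecε, hecle, hece⟩ : ∃ f : Ω → ℝ, StronglyMeasurable[m𝓧.comap X] f ∧
      (∀ ω, ε ≤ f ω) ∧ (∀ ω, f ω ≤ 1 - ε) ∧ f =ᵐ[ℙ] e := by
    refine ⟨fun ω => max ε (min (1 - ε) ((ℙ[W | m𝓧.comap X]) ω)),
      (measurable_const.max (measurable_const.min
        stronglyMeasurable_condExp.measurable)).stronglyMeasurable,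
      fun ω => le_max_left _ _, fun ω => max_le hε2 (min_le_left _ _), ?_⟩
    filter_upwards [he, hbound] with ω h1 h2
    rw [← h1, min_eq_right h2.2, max_eq_right h2.1]
  have hecW : ec =ᵐ[ℙ] ℙ[W | m𝓧.comap X] := hece.trans he
  have hecpos : ∀ ω, 0 < ec ω := fun ω => lt_of_lt_of_le hε (hecε ω)
  have hecpos' : ∀ ω, 0 < 1 - ec ω := fun ω => lt_of_lt_of_le hε (by linarith [hecle ω])
  have hecb : ∀ ω, |ec ω| ≤ 1 := fun ω =>
    abs_le.mpr ⟨by linarith [hecpos ω], by linarith [hecle ω]⟩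
  have hecMeas : Measurable ec := (hecm.mono hX.comap_le).measurable
  -- conditional independence for the modified outcomes
  have hindep : CondIndepFun (m𝓧.comap X) hX.comap_le (fun ω => (Y₀' ω, Y₁' ω)) W ℙ := by
    refine aux_condIndepFun_ae hX.comap_le hunconf ?_
    filter_upwards [hY₀eq, hY₁eq] with ω h2 h3
    rw [h2, h3]
  -- bounds for the weight functions
  have hg₁b : ∀ ω, |1 / ec ω| ≤ 1 / ε := fun ω => by
    rw [abs_of_pos (one_div_pos.mpr (hecpos ω))]
    exact one_div_le_one_div_of_le hε (hecε ω)
  have hg₂b : ∀ ω, |1 / (1 - ec ω)| ≤ 1 / ε := fun ω => by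
    rw [abs_of_pos (one_div_pos.mpr (hecpos' ω))]
    exact one_div_le_one_div_of_le hε (by linarith [hecle ω])
  have hg₃b : ∀ ω, |1 / (ec ω * (1 - ec ω))| ≤ 1 / (ε * ε) := fun ω => by
    rw [abs_of_pos (one_div_pos.mpr (mul_pos (hecpos ω) (hecpos' ω)))]
    exact one_div_le_one_div_of_le (mul_pos hε hε)
      (mul_le_mul (hecε ω) (by linarith [hecle ω]) (le_of_lt hε) (by linarith [hecpos ω]))
  have hg₃Cb : ∀ ω, |C * (1 / (ec ω * (1 - ec ω)))| ≤ |C| * (1 / (ε * ε)) := fun ω => by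
    rw [abs_mul]
    exact mul_le_mul_of_nonneg_left (hg₃b ω) (abs_nonneg C)
  -- strong measurability of the weight functions w.r.t. the sub-σ-algebra
  have hg₁m : StronglyMeasurable[m𝓧.comap X] (fun ω => 1 / ec ω) :=
    (measurable_const.div hecm.measurable).stronglyMeasurable
  have hg₂m : StronglyMeasurable[m𝓧.comap X] (fun ω => 1 / (1 - ec ω)) :=
    (measurable_const.div (measurable_const.sub hecm.measurable)).stronglyMeasurable
  have hg₃Cm : StronglyMeasurable[m𝓧.comap X] (fun ω => C * (1 / (ec ω * (1 - ec ω)))) :=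
    (measurable_const.mul (measurable_const.div
      (hecm.measurable.mul (measurable_const.sub hecm.measurable)))).stronglyMeasurable
  -- integrability of the summands
  have hbddint : ∀ (h : Ω → ℝ) (B : ℝ), Measurable h → (∀ ω, |h ω| ≤ B) →
      ∀ {f : Ω → ℝ}, Integrable f ℙ → Integrable (fun ω => h ω * f ω) ℙ :=
    fun h B hmeas hb {f} hf => hf.bdd_mul (c := B) hmeas.aestronglyMeasurable
      (ae_of_all _ fun ω => by simpa [Real.norm_eq_abs] using hb ω)
  have hWabs : ∀ ω, |W ω| ≤ 1 := fun ω => by rcases hWbin ω with h | h <;> simp [h]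
  have hg₁Wmeas : Measurable (fun ω => 1 / ec ω * W ω) :=
    ((hg₁m.mono hX.comap_le).measurable).mul hW
  have hg₂Wmeas : Measurable (fun ω => 1 / (1 - ec ω) * W ω) :=
    ((hg₂m.mono hX.comap_le).measurable).mul hW
  have hg₃WMeas : Measurable (fun ω => C * (1 / (ec ω * (1 - ec ω))) * W ω) :=
    ((hg₃Cm.mono hX.comap_le).measurable).mul hW
  have hmulabs : ∀ (a b : ℝ) (Ka : ℝ), |a| ≤ Ka → |b| ≤ 1 → |a * b| ≤ Ka := by
    intro a b Ka ha hb
    rw [abs_mul]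
    calc |a| * |b| ≤ Ka * 1 := mul_le_mul ha hb (abs_nonneg _) ((abs_nonneg a).trans ha)
      _ = Ka := mul_one Ka
  have IA₁ : Integrable (fun ω => 1 / ec ω * W ω * Y₁' ω) ℙ :=
    hbddint _ (1/ε) hg₁Wmeas (fun ω => hmulabs _ _ _ (hg₁b ω) (hWabs ω)) hY₁'int
  have IA₂ : Integrable (fun ω => 1 / (1 - ec ω) * W ω * Y₀' ω) ℙ :=
    hbddint _ (1/ε) hg₂Wmeas (fun ω => hmulabs _ _ _ (hg₂b ω) (hWabs ω)) hY₀'int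
  have IA₃ : Integrable (fun ω => C * (1 / (ec ω * (1 - ec ω))) * W ω * 1) ℙ :=
    hbddint _ (|C| * (1/(ε*ε))) hg₃WMeas
      (fun ω => hmulabs _ _ _ (hg₃Cb ω) (hWabs ω)) (integrable_const 1)
  have hg₁ecMeas : Measurable (fun ω => 1 / ec ω * ec ω) :=
    ((hg₁m.mono hX.comap_le).measurable).mul hecMeas
  have hg₂ecMeas : Measurable (fun ω => 1 / (1 - ec ω) * ec ω) :=
    ((hg₂m.mono hX.comap_le).measurable).mul hecMeas
  have hg₃ecMeas : Measurable (fun ω => C * (1 / (ec ω * (1 - ec ω))) * ec ω) :=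
    ((hg₃Cm.mono hX.comap_le).measurable).mul hecMeas
  have IA₁' : Integrable (fun ω => 1 / ec ω * ec ω * Y₁' ω) ℙ :=
    hbddint _ (1/ε) hg₁ecMeas (fun ω => hmulabs _ _ _ (hg₁b ω) (hecb ω)) hY₁'int
  have IA₂' : Integrable (fun ω => 1 / (1 - ec ω) * ec ω * Y₀' ω) ℙ :=
    hbddint _ (1/ε) hg₂ecMeas (fun ω => hmulabs _ _ _ (hg₂b ω) (hecb ω)) hY₀'int
  have IA₃' : Integrable (fun ω => C * (1 / (ec ω * (1 - ec ω))) * ec ω * 1) ℙ :=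
    hbddint _ (|C| * (1/(ε*ε))) hg₃ecMeas
      (fun ω => hmulabs _ _ _ (hg₃Cb ω) (hecb ω)) (integrable_const 1)
  have IB : Integrable (fun ω =>
      C * (1 / (ec ω * (1 - ec ω)) * ec ω) - 1 / (1 - ec ω) * Y₀' ω) ℙ := by
    refine Integrable.sub ?_ ?_
    · refine (integrable_const (|C| * (1/(ε*ε)))).mono'
        ((measurable_const.mul ((measurable_const.div
          (hecMeas.mul (measurable_const.sub hecMeas))).mul hecMeas)).aestronglyMeasurable)
        (ae_of_all _ fun ω => ?_)
      rw [Real.norm_eq_abs, ← mul_assoc]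
      exact hmulabs _ _ _ (hg₃Cb ω) (hecb ω)
    · exact hbddint _ (1/ε) ((hg₂m.mono hX.comap_le).measurable) hg₂b hY₀'int
  -- a.e. rewriting of the integrand
  have keyeq : (fun ω => ((W ω * Y₁ ω + (1 - W ω) * Y₀ ω) - C) * (W ω - e ω) /
        (e ω * (1 - e ω))) =ᵐ[ℙ]
      fun ω => 1 / ec ω * W ω * Y₁' ω + 1 / (1 - ec ω) * W ω * Y₀' ω
        - C * (1 / (ec ω * (1 - ec ω))) * W ω * 1
        + (C * (1 / (ec ω * (1 - ec ω)) * ec ω) - 1 / (1 - ec ω) * Y₀' ω) := by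
    filter_upwards [hece, hY₀eq, hY₁eq] with ω h1 h2 h3
    rw [← h1, h2, h3]
    have hne1 : ec ω ≠ 0 := ne_of_gt (hecpos ω)
    have hne2 : (1:ℝ) - ec ω ≠ 0 := ne_of_gt (hecpos' ω)
    rcases hWbin ω with h | h <;> rw [h] <;> field_simp <;> ring
  -- the three key identities from conditional independence
  have k₁ : ∫ ω, 1 / ec ω * W ω * Y₁' ω ∂ℙ = ∫ ω, 1 / ec ω * ec ω * Y₁' ω ∂ℙ :=
    aux_key hX.comap_le hW hWbin hZmeas hindep hg₁m (by positivity) hg₁b hecm hecb hecW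
      (φ := fun p => p.2)
      ((integrable_map_measure measurable_snd.aestronglyMeasurable hZmeas.aemeasurable).mpr
        hY₁'int)
  have k₂ : ∫ ω, 1 / (1 - ec ω) * W ω * Y₀' ω ∂ℙ
      = ∫ ω, 1 / (1 - ec ω) * ec ω * Y₀' ω ∂ℙ :=
    aux_key hX.comap_le hW hWbin hZmeas hindep hg₂m (by positivity) hg₂b hecm hecb hecW
      (φ := fun p => p.1)
      ((integrable_map_measure measurable_fst.aestronglyMeasurable hZmeas.aemeasurable).mpr
        hY₀'int)
  have k₃ : ∫ ω, C * (1 / (ec ω * (1 - ec ω))) * W ω * 1 ∂ℙ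
      = ∫ ω, C * (1 / (ec ω * (1 - ec ω))) * ec ω * 1 ∂ℙ :=
    aux_key hX.comap_le hW hWbin hZmeas hindep hg₃Cm (by positivity) hg₃Cb hecm hecb hecW
      (φ := fun _ => (1:ℝ)) (integrable_const 1)
  -- assembling everything
  have IA12 : Integrable (fun ω => 1 / ec ω * W ω * Y₁' ω
      + 1 / (1 - ec ω) * W ω * Y₀' ω) ℙ := IA₁.add IA₂
  have IA123 : Integrable (fun ω => 1 / ec ω * W ω * Y₁' ω
      + 1 / (1 - ec ω) * W ω * Y₀' ω
      - C * (1 / (ec ω * (1 - ec ω))) * W ω * 1) ℙ := IA12.sub IA₃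
  have IA12' : Integrable (fun ω => 1 / ec ω * ec ω * Y₁' ω
      + 1 / (1 - ec ω) * ec ω * Y₀' ω) ℙ := IA₁'.add IA₂'
  have IA123' : Integrable (fun ω => 1 / ec ω * ec ω * Y₁' ω
      + 1 / (1 - ec ω) * ec ω * Y₀' ω
      - C * (1 / (ec ω * (1 - ec ω))) * ec ω * 1) ℙ := IA12'.sub IA₃'
  calc ∫ ω, ((W ω * Y₁ ω + (1 - W ω) * Y₀ ω) - C) * (W ω - e ω) / (e ω * (1 - e ω)) ∂ℙ
      = ∫ ω, (1 / ec ω * W ω * Y₁' ω + 1 / (1 - ec ω) * W ω * Y₀' ω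
          - C * (1 / (ec ω * (1 - ec ω))) * W ω * 1
          + (C * (1 / (ec ω * (1 - ec ω)) * ec ω) - 1 / (1 - ec ω) * Y₀' ω)) ∂ℙ :=
        integral_congr_ae keyeq
    _ = ((∫ ω, 1 / ec ω * W ω * Y₁' ω ∂ℙ) + (∫ ω, 1 / (1 - ec ω) * W ω * Y₀' ω ∂ℙ)
          - (∫ ω, C * (1 / (ec ω * (1 - ec ω))) * W ω * 1 ∂ℙ))
          + ∫ ω, (C * (1 / (ec ω * (1 - ec ω)) * ec ω) - 1 / (1 - ec ω) * Y₀' ω) ∂ℙ := by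
        rw [integral_add IA123 IB, integral_sub IA12 IA₃, integral_add IA₁ IA₂]
    _ = ((∫ ω, 1 / ec ω * ec ω * Y₁' ω ∂ℙ) + (∫ ω, 1 / (1 - ec ω) * ec ω * Y₀' ω ∂ℙ)
          - (∫ ω, C * (1 / (ec ω * (1 - ec ω))) * ec ω * 1 ∂ℙ))
          + ∫ ω, (C * (1 / (ec ω * (1 - ec ω)) * ec ω) - 1 / (1 - ec ω) * Y₀' ω) ∂ℙ := by
        rw [k₁, k₂, k₃]
    _ = ∫ ω, (1 / ec ω * ec ω * Y₁' ω + 1 / (1 - ec ω) * ec ω * Y₀' ω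
          - C * (1 / (ec ω * (1 - ec ω))) * ec ω * 1
          + (C * (1 / (ec ω * (1 - ec ω)) * ec ω) - 1 / (1 - ec ω) * Y₀' ω)) ∂ℙ := by
        rw [integral_add IA123' IB, integral_sub IA12' IA₃', integral_add IA₁' IA₂']
    _ = ∫ ω, (Y₁' ω - Y₀' ω) ∂ℙ := by
        refine integral_congr_ae (Eventually.of_forall fun ω => ?_)
        have hne1 : ec ω ≠ 0 := ne_of_gt (hecpos ω)
        have hne2 : (1:ℝ) - ec ω ≠ 0 := ne_of_gt (hecpos' ω)
        field_simp
        ring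
    _ = (∫ ω, Y₁' ω ∂ℙ) - ∫ ω, Y₀' ω ∂ℙ := integral_sub hY₁'int hY₀'int
    _ = (∫ ω, Y₁ ω ∂ℙ) - ∫ ω, Y₀ ω ∂ℙ := by
        rw [integral_congr_ae hY₁eq, integral_congr_ae hY₀eq]
end

section
/- Let (Ω, 𝓕, ℙ) be a probability space, X : Ω → 𝓧 a measurable map into a measurable space, W : Ω → ℝ a random variable taking values in {0,1}, and Y₀, Y₁ : Ω → ℝ random variables taking values in {0,1}. Assume W is independent of the triple (X, Y₀, Y₁) and ℙ(W = 1) = 1/2. Define Y^obs = W·Y₁ + (1−W)·Y₀ and the class-variable transformation Z = W·Y^obs + (1−W)·(1−Y^obs) (so Z = 1 exactly when W = 1, Y^obs = 1 or W = 0, Y^obs = 0, and Z = 0 otherwise). Then, almost surely, 2·E[Z | σ(X)] − 1 = E[Y₁ | σ(X)] − E[Y₀ | σ(X)]. -/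
open MeasureTheory ProbabilityTheory

lemma binary_integrable {Ω : Type*} [MeasureSpace Ω] [IsProbabilityMeasure (ℙ : Measure Ω)]
    {f : Ω → ℝ} (hf : Measurable f) (hbin : ∀ ω, f ω = 0 ∨ f ω = 1) :
    Integrable f ℙ := by
  refine (MemLp.of_bound hf.aestronglyMeasurable 1 ?_).integrable le_top
  filter_upwards with ω
  rcases hbin ω with h | h <;> simp [h]

/-- `E[V·U | σ(X)] = E[V] · E[U | σ(X)]` when `V` is independent of `(X, U)`,
for binary-valued `V`, `U`. -/
lemma condexp_mul_indep {Ω 𝓧 : Type*} [MeasureSpace Ω] [IsProbabilityMeasure (ℙ : Measure Ω)]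
    [m𝓧 : MeasurableSpace 𝓧]
    (X : Ω → 𝓧) (hX : Measurable X)
    (V U : Ω → ℝ) (hV : Measurable V) (hVbin : ∀ ω, V ω = 0 ∨ V ω = 1)
    (hU : Measurable U) (hUbin : ∀ ω, U ω = 0 ∨ U ω = 1)
    (hindep : IndepFun V (fun ω => (X ω, U ω)) ℙ) :
    ℙ[fun ω => V ω * U ω | m𝓧.comap X]
      =ᵐ[ℙ] fun ω => (∫ ω', V ω') * (ℙ[U | m𝓧.comap X]) ω := by
  have hm : m𝓧.comap X ≤ (by infer_instance : MeasurableSpace Ω) := hX.comap_le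
  have hVint : Integrable V ℙ := binary_integrable hV hVbin
  have hUint : Integrable U ℙ := binary_integrable hU hUbin
  have hfint : Integrable (fun ω => V ω * U ω) ℙ := by
    refine binary_integrable (hV.mul hU) fun ω => ?_
    rcases hVbin ω with h | h <;> rcases hUbin ω with h' | h' <;> simp [h, h']
  symm
  refine ae_eq_condExp_of_forall_setIntegral_eq hm hfint
    (fun s _ _ => (integrable_condExp.const_mul _).integrableOn)
    (fun s hs _ => ?_)
    ((stronglyMeasurable_condExp.const_mul _).aestronglyMeasurable)
  -- s = X ⁻¹' A
  obtain ⟨A, hA, rfl⟩ := hs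
  have hAs : MeasurableSet (X ⁻¹' A) := hX hA
  -- rewrite RHS as a full-space integral of a product
  have key : ∫ ω, V ω * (U ω * (X ⁻¹' A).indicator (fun _ => (1:ℝ)) ω) ∂ℙ
      = (∫ ω, V ω) * ∫ ω, U ω * (X ⁻¹' A).indicator (fun _ => (1:ℝ)) ω ∂ℙ := by
    have hφ : Measurable fun p : 𝓧 × ℝ => p.2 * A.indicator (fun _ => (1:ℝ)) p.1 :=
      measurable_snd.mul ((measurable_indicator_const_iff 1).mpr hA |>.comp measurable_fst)
    have hIndep2 : IndepFun V (fun ω => U ω * (X ⁻¹' A).indicator (fun _ => (1:ℝ)) ω) ℙ := by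
      have heq : (fun ω => U ω * (X ⁻¹' A).indicator (fun _ => (1:ℝ)) ω)
          = (fun p : 𝓧 × ℝ => p.2 * A.indicator (fun _ => (1:ℝ)) p.1) ∘ fun ω => (X ω, U ω) := by
        ext ω
        by_cases h : X ω ∈ A <;> simp [Set.indicator, h]
      rw [heq]
      exact hindep.comp measurable_id hφ
    exact hIndep2.integral_fun_mul_eq_mul_integral hV.aestronglyMeasurable
      (hU.mul ((measurable_indicator_const_iff 1).mpr hAs)).aestronglyMeasurable
  have ind_eq : ∀ g : Ω → ℝ, ∫ ω, g ω * (X ⁻¹' A).indicator (fun _ => (1:ℝ)) ω ∂ℙ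
      = ∫ ω in X ⁻¹' A, g ω ∂ℙ := by
    intro g
    rw [← integral_indicator hAs]
    congr 1
    ext ω
    by_cases h : ω ∈ X ⁻¹' A <;> simp [Set.indicator, h]
  have h1 : ∫ ω in X ⁻¹' A, V ω * U ω ∂ℙ
      = (∫ ω, V ω) * ∫ ω in X ⁻¹' A, U ω ∂ℙ := by
    rw [← ind_eq (fun ω => V ω * U ω), ← ind_eq U, ← key]
    congr 1
    ext ω
    ring
  rw [integral_const_mul, setIntegral_condExp hm hUint ⟨A, hA, rfl⟩, h1]

/-- Class-variable transformation of Jaskowski–Jaroszewicz: in a randomized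
experiment with `ℙ(W = 1) = 1/2`, with `Z = W·Y^obs + (1−W)·(1−Y^obs)`, one has
`2·E[Z | σ(X)] − 1 = E[Y₁ | σ(X)] − E[Y₀ | σ(X)]` a.s. -/
theorem class_variable_transformation
    {Ω 𝓧 : Type*} [MeasureSpace Ω] [IsProbabilityMeasure (ℙ : Measure Ω)]
    [m𝓧 : MeasurableSpace 𝓧]
    (X : Ω → 𝓧) (hX : Measurable X)
    (W Y₀ Y₁ : Ω → ℝ)
    (hW : Measurable W) (hWbin : ∀ ω, W ω = 0 ∨ W ω = 1)
    (hY₀ : Measurable Y₀) (hY₀bin : ∀ ω, Y₀ ω = 0 ∨ Y₀ ω = 1)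
    (hY₁ : Measurable Y₁) (hY₁bin : ∀ ω, Y₁ ω = 0 ∨ Y₁ ω = 1)
    (hindep : IndepFun W (fun ω => (X ω, Y₀ ω, Y₁ ω)) ℙ)
    (hp : ℙ {ω | W ω = 1} = 1/2) :
    (fun ω =>
        2 * (ℙ[(fun ω' =>
          W ω' * (W ω' * Y₁ ω' + (1 - W ω') * Y₀ ω') +
            (1 - W ω') * (1 - (W ω' * Y₁ ω' + (1 - W ω') * Y₀ ω'))) | m𝓧.comap X]) ω - 1)
      =ᵐ[ℙ] fun ω => (ℙ[Y₁ | m𝓧.comap X]) ω - (ℙ[Y₀ | m𝓧.comap X]) ω := by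
  have hm : m𝓧.comap X ≤ (by infer_instance : MeasurableSpace Ω) := hX.comap_le
  -- E[W] = 1/2
  have hEW : (∫ ω, W ω) = 1/2 := by
    have hWeq : W = Set.indicator {ω | W ω = 1} (fun _ => (1:ℝ)) := by
      ext ω
      rcases hWbin ω with h | h <;> simp [Set.indicator, h]
    rw [hWeq, integral_indicator (show MeasurableSet {ω | W ω = 1} from hW (measurableSet_singleton 1)), setIntegral_const, measureReal_def, hp]
    norm_num
  have hEW' : (∫ ω, 1 - W ω) = 1/2 := by
    rw [integral_sub (integrable_const 1) (binary_integrable hW hWbin), hEW,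
      integral_const]
    simp
    norm_num
  -- Z = W·Y₁ + (1-W)·(1-Y₀)
  have hZeq : (fun ω' =>
      W ω' * (W ω' * Y₁ ω' + (1 - W ω') * Y₀ ω') +
        (1 - W ω') * (1 - (W ω' * Y₁ ω' + (1 - W ω') * Y₀ ω')))
      = fun ω => W ω * Y₁ ω + (1 - W ω) * (1 - Y₀ ω) := by
    ext ω
    rcases hWbin ω with h | h <;> simp [h]
  rw [hZeq]
  -- conditional expectation of the two pieces
  have h1 : ℙ[fun ω => W ω * Y₁ ω | m𝓧.comap X]
      =ᵐ[ℙ] fun ω => (1/2 : ℝ) * (ℙ[Y₁ | m𝓧.comap X]) ω := by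
    have hi : IndepFun W (fun ω => (X ω, Y₁ ω)) ℙ :=
      hindep.comp measurable_id (measurable_fst.prodMk (measurable_snd.comp measurable_snd))
    have := condexp_mul_indep X hX W Y₁ hW hWbin hY₁ hY₁bin hi
    rw [hEW] at this
    exact this
  have h0 : ℙ[fun ω => (1 - W ω) * (1 - Y₀ ω) | m𝓧.comap X]
      =ᵐ[ℙ] fun ω => (1/2 : ℝ) * (ℙ[fun ω' => 1 - Y₀ ω' | m𝓧.comap X]) ω := by
    have hi : IndepFun (fun ω => 1 - W ω) (fun ω => (X ω, 1 - Y₀ ω)) ℙ :=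
      hindep.comp (measurable_const.sub measurable_id)
        (measurable_fst.prodMk (measurable_const.sub (measurable_fst.comp measurable_snd)))
    have := condexp_mul_indep X hX (fun ω => 1 - W ω) (fun ω => 1 - Y₀ ω)
      (measurable_const.sub hW)
      (fun ω => by rcases hWbin ω with h | h <;> simp [h])
      (measurable_const.sub hY₀)
      (fun ω => by rcases hY₀bin ω with h | h <;> simp [h]) hi
    rw [hEW'] at this
    exact this
  have hY₀c : ℙ[fun ω' => 1 - Y₀ ω' | m𝓧.comap X]
      =ᵐ[ℙ] fun ω => 1 - (ℙ[Y₀ | m𝓧.comap X]) ω := by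
    have := condExp_sub (m := m𝓧.comap X) (μ := ℙ)
      (integrable_const (1:ℝ)) (binary_integrable hY₀ hY₀bin)
    refine this.trans ?_
    have hc := condExp_const (μ := ℙ) hm (1:ℝ)
    filter_upwards with ω
    simp [Pi.sub_apply, hc]
  have hWY₁int : Integrable (fun ω => W ω * Y₁ ω) ℙ := by
    refine binary_integrable (hW.mul hY₁) fun ω => ?_
    rcases hWbin ω with h | h <;> rcases hY₁bin ω with h' | h' <;> simp [h, h']
  have hW0int : Integrable (fun ω => (1 - W ω) * (1 - Y₀ ω)) ℙ := by
    refine binary_integrable ((measurable_const.sub hW).mul (measurable_const.sub hY₀))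
      fun ω => ?_
    rcases hWbin ω with h | h <;> rcases hY₀bin ω with h' | h' <;> simp [h, h']
  have hadd := condExp_add (m := m𝓧.comap X) (μ := ℙ) hWY₁int hW0int
  filter_upwards [hadd, h1, h0, hY₀c] with ω hω h1ω h0ω hcω
  have : (ℙ[fun ω => W ω * Y₁ ω + (1 - W ω) * (1 - Y₀ ω) | m𝓧.comap X]) ω
      = (1/2 : ℝ) * (ℙ[Y₁ | m𝓧.comap X]) ω
        + (1/2 : ℝ) * (1 - (ℙ[Y₀ | m𝓧.comap X]) ω) := by
    rw [show (fun ω => W ω * Y₁ ω + (1 - W ω) * (1 - Y₀ ω))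
        = (fun ω => W ω * Y₁ ω) + fun ω => (1 - W ω) * (1 - Y₀ ω) from rfl, hω]
    simp only [Pi.add_apply]
    rw [h1ω, h0ω, hcω]
  rw [this]
  ring
end

section
/- Let (Ω, 𝓕, ℙ) be a probability space, X : Ω → 𝓧 a measurable map into a measurable space, W : Ω → ℝ a random variable taking values in {0,1}, and Y₀, Y₁ : Ω → ℝ integrable random variables. Assume W is independent of the triple (X, Y₀, Y₁) and ℙ(W = 1) = p for some p ∈ (0,1). Define Y^obs = W·Y₁ + (1−W)·Y₀ and, for a constant C ∈ ℝ, Ẑ* = (Y^obs − C)·(W − p) / (p·(1 − p)). Then, almost surely, E[Ẑ* | σ(X)] = E[Y₁ | σ(X)] − E[Y₀ | σ(X)]. -/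
open MeasureTheory ProbabilityTheory

/-- If `W` is independent of `(X, Y)`, then on any set in `σ(X)`,
`∫ W·Y = E[W] · ∫ Y`. -/
lemma setIntegral_indep_mul_aux {Ω 𝓧 : Type*} [MeasureSpace Ω]
    [IsProbabilityMeasure (ℙ : Measure Ω)] [m𝓧 : MeasurableSpace 𝓧]
    {X : Ω → 𝓧} (hX : Measurable X) {W Y : Ω → ℝ}
    (hWint : Integrable W ℙ) (hY : Integrable Y ℙ)
    (hindep : IndepFun W (fun ω => (X ω, Y ω)) ℙ)
    {t : Set 𝓧} (ht : MeasurableSet t) :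
    ∫ ω in X ⁻¹' t, W ω * Y ω ∂ℙ = (∫ ω, W ω ∂ℙ) * ∫ ω in X ⁻¹' t, Y ω ∂ℙ := by
  have hs : MeasurableSet (X ⁻¹' t) := hX ht
  set h : Ω → ℝ := (X ⁻¹' t).indicator Y with hh
  have hYs : Integrable h ℙ := hY.indicator hs
  have hcomp : h = (fun q : 𝓧 × ℝ => t.indicator (fun _ => (1:ℝ)) q.1 * q.2) ∘
      (fun ω => (X ω, Y ω)) := by
    funext ω
    simp only [Function.comp_apply, hh]
    by_cases hmem : ω ∈ X ⁻¹' t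
    · rw [Set.indicator_of_mem hmem, Set.indicator_of_mem (Set.mem_preimage.mp hmem), one_mul]
    · rw [Set.indicator_of_notMem hmem, Set.indicator_of_notMem
        (fun h => hmem (Set.mem_preimage.mpr h)), zero_mul]
  have hφ : Measurable (fun q : 𝓧 × ℝ => t.indicator (fun _ => (1:ℝ)) q.1 * q.2) :=
    ((measurable_const.indicator ht).comp measurable_fst).mul measurable_snd
  have hWh : IndepFun W h ℙ := by
    rw [hcomp]
    exact hindep.comp measurable_id hφ
  have hind : (X ⁻¹' t).indicator (fun ω => W ω * Y ω) = fun ω => W ω * h ω := by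
    funext ω
    by_cases hmem : ω ∈ X ⁻¹' t <;>
      simp [hh, Set.indicator_of_mem, Set.indicator_of_notMem, hmem]
  rw [← integral_indicator hs, hind]
  have := hWh.integral_mul_eq_mul_integral hWint.aestronglyMeasurable hYs.aestronglyMeasurable
  simp only [Pi.mul_apply] at this
  rw [show (fun ω => W ω * h ω) = W * h from rfl, show integral ℙ (W * h) = _ from this, hh, integral_indicator hs]

/-- In a completely randomized experiment with constant propensity
`p = ℙ(W = 1) ∈ (0,1)`, the constant-shifted transformed outcome
`Ẑ* = (Y^obs − C)·(W − p)/(p·(1 − p))` is conditionally unbiased for the CATE. -/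
theorem transformed_outcome_shifted_condExp_randomized
    {Ω 𝓧 : Type*} [MeasureSpace Ω] [IsProbabilityMeasure (ℙ : Measure Ω)]
    [m𝓧 : MeasurableSpace 𝓧]
    (X : Ω → 𝓧) (hX : Measurable X)
    (W Y₀ Y₁ : Ω → ℝ)
    (hW : Measurable W) (hWbin : ∀ ω, W ω = 0 ∨ W ω = 1)
    (hY₀ : Integrable Y₀ ℙ) (hY₁ : Integrable Y₁ ℙ)
    (hindep : IndepFun W (fun ω => (X ω, Y₀ ω, Y₁ ω)) ℙ)
    (p : ℝ) (hp : p ∈ Set.Ioo (0 : ℝ) 1)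
    (hpW : ℙ {ω | W ω = 1} = ENNReal.ofReal p)
    (C : ℝ) :
    ℙ[(fun ω => ((W ω * Y₁ ω + (1 - W ω) * Y₀ ω) - C) * (W ω - p) /
        (p * (1 - p))) | m𝓧.comap X]
      =ᵐ[ℙ] fun ω => (ℙ[Y₁ | m𝓧.comap X]) ω - (ℙ[Y₀ | m𝓧.comap X]) ω := by
  obtain ⟨hp0, hp1⟩ := hp
  have hp1' : (0:ℝ) < 1 - p := by linarith
  have hm : m𝓧.comap X ≤ (inferInstance : MeasurableSpace Ω) := hX.comap_le
  haveI : SigmaFinite ((ℙ : Measure Ω).trim hm) := inferInstance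
  -- integrability of W
  have hWint : Integrable W ℙ := by
    refine (integrable_const (1:ℝ)).mono' hW.aestronglyMeasurable ?_
    filter_upwards with ω
    rcases hWbin ω with h | h <;> simp [h]
  -- E[W] = p
  have hEW : ∫ ω, W ω ∂ℙ = p := by
    have hWeq : W = Set.indicator {ω | W ω = 1} (fun _ => (1:ℝ)) := by
      funext ω
      rcases hWbin ω with h | h <;> simp [Set.indicator_apply, h]
    have hsW : MeasurableSet {ω | W ω = 1} := hW (measurableSet_singleton 1)
    rw [hWeq, integral_indicator hsW, setIntegral_const, measureReal_def, hpW, smul_eq_mul, mul_one,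
      ENNReal.toReal_ofReal hp0.le]
  -- rewrite the transformed outcome pointwise
  have hptwise : (fun ω => ((W ω * Y₁ ω + (1 - W ω) * Y₀ ω) - C) * (W ω - p) /
      (p * (1 - p))) =
      fun ω => W ω * (Y₁ ω - C) / p - (1 - W ω) * (Y₀ ω - C) / (1 - p) := by
    funext ω
    rcases hWbin ω with h | h <;>
      · rw [h]; field_simp; ring
  rw [hptwise]
  -- integrability pieces
  have hint1 : Integrable (fun ω => W ω * (Y₁ ω - C)) ℙ := by
    refine ((hY₁.sub (integrable_const C)).norm.mono' (hW.aestronglyMeasurable.mul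
      ((hY₁.sub (integrable_const C)).aestronglyMeasurable)) ?_)
    filter_upwards with ω
    rcases hWbin ω with h | h <;> simp [h, norm_mul, abs_nonneg]
  have hint0 : Integrable (fun ω => (1 - W ω) * (Y₀ ω - C)) ℙ := by
    refine ((hY₀.sub (integrable_const C)).norm.mono'
      (((aestronglyMeasurable_const.sub hW.aestronglyMeasurable)).mul
      ((hY₀.sub (integrable_const C)).aestronglyMeasurable)) ?_)
    filter_upwards with ω
    rcases hWbin ω with h | h <;> simp [h, norm_mul, abs_nonneg]
  have hf_int : Integrable (fun ω => W ω * (Y₁ ω - C) / p -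
      (1 - W ω) * (Y₀ ω - C) / (1 - p)) ℙ :=
    (hint1.div_const p).sub (hint0.div_const (1 - p))
  -- apply uniqueness of conditional expectation
  refine (ae_eq_condExp_of_forall_setIntegral_eq hm hf_int
    (fun s _ _ => (integrable_condExp.sub integrable_condExp).integrableOn)
    (fun s hs _ => ?_)
    ((stronglyMeasurable_condExp.sub stronglyMeasurable_condExp).aestronglyMeasurable)).symm
  obtain ⟨t, ht, rfl⟩ := hs
  symm
  -- independence facts
  have hi1 : IndepFun W (fun ω => (X ω, Y₁ ω - C)) ℙ := by
    have hψ : Measurable (fun q : 𝓧 × ℝ × ℝ => (q.1, q.2.2 - C)) :=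
      measurable_fst.prodMk (measurable_snd.snd.sub measurable_const)
    exact hindep.comp measurable_id hψ
  have hi0 : IndepFun W (fun ω => (X ω, Y₀ ω - C)) ℙ := by
    have hψ : Measurable (fun q : 𝓧 × ℝ × ℝ => (q.1, q.2.1 - C)) :=
      measurable_fst.prodMk (measurable_snd.fst.sub measurable_const)
    exact hindep.comp measurable_id hψ
  have hY₁C : Integrable (fun ω => Y₁ ω - C) ℙ := hY₁.sub (integrable_const C)
  have hY₀C : Integrable (fun ω => Y₀ ω - C) ℙ := hY₀.sub (integrable_const C)
  have key1 : ∫ ω in X ⁻¹' t, W ω * (Y₁ ω - C) ∂ℙ =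
      p * ∫ ω in X ⁻¹' t, (Y₁ ω - C) ∂ℙ := by
    rw [setIntegral_indep_mul_aux hX hWint hY₁C hi1 ht, hEW]
  have key0 : ∫ ω in X ⁻¹' t, W ω * (Y₀ ω - C) ∂ℙ =
      p * ∫ ω in X ⁻¹' t, (Y₀ ω - C) ∂ℙ := by
    rw [setIntegral_indep_mul_aux hX hWint hY₀C hi0 ht, hEW]
  have hs' : MeasurableSet (X ⁻¹' t) := hX ht
  have hWY₀ : Integrable (fun ω => W ω * (Y₀ ω - C)) ℙ := by
    refine ((hY₀.sub (integrable_const C)).norm.mono' (hW.aestronglyMeasurable.mul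
      (hY₀C.aestronglyMeasurable)) ?_)
    filter_upwards with ω
    rcases hWbin ω with h | h <;> simp [h, norm_mul, abs_nonneg]
  -- expand (1-W)(Y₀-C) = (Y₀-C) - W(Y₀-C)
  have key0' : ∫ ω in X ⁻¹' t, (1 - W ω) * (Y₀ ω - C) ∂ℙ =
      (1 - p) * ∫ ω in X ⁻¹' t, (Y₀ ω - C) ∂ℙ := by
    have : ∀ ω, (1 - W ω) * (Y₀ ω - C) = (Y₀ ω - C) - W ω * (Y₀ ω - C) := by
      intro ω; ring
    simp_rw [this]
    rw [integral_sub (hY₀C.integrableOn) (hWY₀.integrableOn), key0]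
    ring
  -- compute the set integral of the transformed outcome
  calc ∫ ω in X ⁻¹' t,
        (W ω * (Y₁ ω - C) / p - (1 - W ω) * (Y₀ ω - C) / (1 - p)) ∂ℙ
      = (∫ ω in X ⁻¹' t, W ω * (Y₁ ω - C) ∂ℙ) / p -
        (∫ ω in X ⁻¹' t, (1 - W ω) * (Y₀ ω - C) ∂ℙ) / (1 - p) := by
        rw [integral_sub ((hint1.div_const p).integrableOn)
          ((hint0.div_const (1 - p)).integrableOn), integral_div, integral_div]
    _ = (∫ ω in X ⁻¹' t, (Y₁ ω - C) ∂ℙ) - (∫ ω in X ⁻¹' t, (Y₀ ω - C) ∂ℙ) := by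
        rw [key1, key0']
        field_simp
    _ = (∫ ω in X ⁻¹' t, Y₁ ω ∂ℙ) - (∫ ω in X ⁻¹' t, Y₀ ω ∂ℙ) := by
        rw [integral_sub hY₁.integrableOn (integrable_const C).integrableOn,
          integral_sub hY₀.integrableOn (integrable_const C).integrableOn]
        ring
    _ = ∫ ω in X ⁻¹' t,
          ((ℙ[Y₁ | m𝓧.comap X]) ω - (ℙ[Y₀ | m𝓧.comap X]) ω) ∂ℙ := by
        rw [integral_sub (integrable_condExp.integrableOn)
          (integrable_condExp.integrableOn),
          setIntegral_condExp hm hY₁ ⟨t, ht, rfl⟩,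
          setIntegral_condExp hm hY₀ ⟨t, ht, rfl⟩]
end
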